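/- arXiv:1501.02700 — 6 statements merged into one kernel-verified Lean document; each statement's English description precedes it below -/
import Mathlib

section
/- Let α > 1, λ > 0, k ≥ 1, and set u_n = (k + λ/k)^n α^{n(2k−n−1)/2} / n!. Then for all 0 ≤ j ≤ k−1, u_j < u_{2k−1−j}; i.e., v_j := u_{2k−1−j} − u_j > 0. -/
open Real

/-- Let `α > 1`, `λ > 0`, `k ≥ 1`, and `u_n = (k + λ/k)^n α^{n(2k-n-1)/2} / n!`.
Then for all `0 ≤ j ≤ k-1`, `u_j < u_{2k-1-j}`, i.e. `v_j := u_{2k-1-j} - u_j > 0`. -/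
theorem u_lt_u (α lam : ℝ) (hα : 1 < α) (hlam : 0 < lam) (k : ℕ) (hk : 1 ≤ k)
    (u : ℕ → ℝ)
    (hu : ∀ n : ℕ, u n = ((k : ℝ) + lam / (k : ℝ)) ^ n
      * α ^ (((n : ℝ) * (2 * (k : ℝ) - (n : ℝ) - 1)) / 2) / (n.factorial : ℝ))
    (j : ℕ) (hj : j ≤ k - 1) :
    u j < u (2 * k - 1 - j) := by
  obtain ⟨e, he⟩ : ∃ e, k = j + 1 + e := ⟨k - 1 - j, by omega⟩
  have hn : 2 * k - 1 - j = k + e := by omega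
  rw [hn, hu j, hu (k + e)]
  set c : ℝ := (k : ℝ) + lam / (k : ℝ) with hcdef
  have hk0 : (0:ℝ) < (k:ℝ) := by exact_mod_cast hk
  have hc : (k:ℝ) < c := by
    have h0 : 0 < lam / (k:ℝ) := div_pos hlam hk0
    rw [hcdef]
    linarith
  have hc0 : (0:ℝ) < c := lt_trans hk0 hc
  have key : ∀ d b : ℕ, d + 1 + b = k →
      (((k + d).factorial : ℝ)) < c ^ (2 * d + 1) * (b.factorial : ℝ) := by
    intro d
    induction d with
    | zero =>
      intro b hb
      have hkb : k + 0 = b + 1 := by omega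
      rw [hkb, Nat.factorial_succ]
      have hFpos : (0:ℝ) < (b.factorial : ℝ) := by positivity
      have hbc : ((b:ℝ) + 1) < c := by
        have hle : b + 1 ≤ k := by omega
        have : ((b:ℝ) + 1) ≤ (k:ℝ) := by exact_mod_cast hle
        linarith
      push_cast
      calc ((b:ℝ) + 1) * (b.factorial : ℝ) < c * (b.factorial : ℝ) := by
            exact mul_lt_mul_of_pos_right hbc hFpos
        _ = c ^ (2 * 0 + 1) * (b.factorial : ℝ) := by ring
    | succ d ih =>
      intro b hb
      have hb' : d + 1 + (b + 1) = k := by omega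
      have h1 := ih (b + 1) hb'
      have hfac : (((k + (d + 1)).factorial : ℕ) : ℝ)
          = ((k:ℝ) + d + 1) * (((k + d).factorial : ℕ) : ℝ) := by
        have : k + (d + 1) = (k + d) + 1 := by omega
        rw [this, Nat.factorial_succ]
        push_cast
        ring
      have hfb : (((b + 1).factorial : ℕ) : ℝ) = ((b:ℝ) + 1) * ((b.factorial : ℕ) : ℝ) := by
        rw [Nat.factorial_succ]; push_cast; ring
      have hkr : (k:ℝ) = (d:ℝ) + 2 + (b:ℝ) := by exact_mod_cast congrArg (Nat.cast : ℕ → ℝ) hb.symm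
      have hprod : ((k:ℝ) + d + 1) * ((b:ℝ) + 1) < c ^ 2 := by
        have h2 : ((k:ℝ))^2 < c^2 := by nlinarith
        have h3 : ((k:ℝ) + d + 1) * ((b:ℝ) + 1) ≤ (k:ℝ)^2 := by nlinarith [sq_nonneg ((d:ℝ) + 1)]
        linarith
      have hFpos : (0:ℝ) < (b.factorial : ℝ) := by positivity
      have hFpos2 : (0:ℝ) < ((k + d).factorial : ℝ) := by positivity
      have hcpow : (0:ℝ) < c ^ (2 * d + 1) := pow_pos hc0 _
      have hkd : (0:ℝ) < (k:ℝ) + d + 1 := by positivity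
      rw [hfac]
      have step1 : ((k:ℝ) + d + 1) * (((k + d).factorial : ℕ) : ℝ)
          < ((k:ℝ) + d + 1) * (c ^ (2 * d + 1) * (((b + 1).factorial : ℕ) : ℝ)) :=
        mul_lt_mul_of_pos_left h1 hkd
      have step2 : ((k:ℝ) + d + 1) * (c ^ (2 * d + 1) * (((b + 1).factorial : ℕ) : ℝ))
          = c ^ (2 * d + 1) * ((((k:ℝ) + d + 1) * ((b:ℝ) + 1)) * (b.factorial : ℝ)) := by
        rw [hfb]; ring
      have step3 : c ^ (2 * d + 1) * ((((k:ℝ) + d + 1) * ((b:ℝ) + 1)) * (b.factorial : ℝ))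
          < c ^ (2 * d + 1) * (c ^ 2 * (b.factorial : ℝ)) := by
        apply mul_lt_mul_of_pos_left _ hcpow
        exact mul_lt_mul_of_pos_right hprod hFpos
      have step4 : c ^ (2 * d + 1) * (c ^ 2 * (b.factorial : ℝ))
          = c ^ (2 * (d + 1) + 1) * (b.factorial : ℝ) := by
        rw [show 2 * (d + 1) + 1 = (2 * d + 1) + 2 from by omega, pow_add]; ring
      linarith
  have hkey := key e j (by omega)
  -- exponents of α agree
  have hkR : (k:ℝ) = (j:ℝ) + 1 + (e:ℝ) := by exact_mod_cast congrArg (Nat.cast : ℕ → ℝ) he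
  have hexp : (((k + e : ℕ) : ℝ) * (2 * (k:ℝ) - ((k + e : ℕ) : ℝ) - 1)) / 2
      = (((j : ℕ) : ℝ) * (2 * (k:ℝ) - ((j : ℕ) : ℝ) - 1)) / 2 := by
    push_cast
    rw [hkR]
    ring
  rw [hexp]
  set A : ℝ := α ^ ((((j : ℕ) : ℝ) * (2 * (k:ℝ) - ((j : ℕ) : ℝ) - 1)) / 2) with hA
  have hApos : (0:ℝ) < A := Real.rpow_pos_of_pos (by linarith) _
  have hFj : (0:ℝ) < (j.factorial : ℝ) := by positivity
  have hFn : (0:ℝ) < ((k + e).factorial : ℝ) := by positivity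
  rw [div_lt_div_iff₀ hFj hFn]
  have hpow : c ^ (k + e) = c ^ j * c ^ (2 * e + 1) := by
    rw [← pow_add]; congr 1; omega
  rw [hpow]
  have hcj : (0:ℝ) < c ^ j := pow_pos hc0 _
  calc c ^ j * A * ((k + e).factorial : ℝ)
      < c ^ j * A * (c ^ (2 * e + 1) * (j.factorial : ℝ)) := by
        exact mul_lt_mul_of_pos_left hkey (by positivity)
    _ = c ^ j * c ^ (2 * e + 1) * A * (j.factorial : ℝ) := by ring
end

section
/- For α > 1, the series h(α) = Σ_{j=1}^∞ (2j−1)(−1)^{j−1} α^{−j(j−1)/2} converges and equals the infinite product ∏_{k=1}^∞ (1 − α^{−k})^3 (a special case of Jacobi's triple product identity). -/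
open Finset Filter Topology

namespace JTP

noncomputable def Dq (q : ℝ) (k : ℕ) : ℝ := ∏ t ∈ Finset.range k, (1 - q ^ (t + 1))

noncomputable def gq (q : ℝ) (m k : ℕ) : ℝ :=
  if k ≤ m then Dq q m / (Dq q (m - k) * Dq q k) else 0

variable {q : ℝ}

lemma Dq_zero : Dq q 0 = 1 := by simp [Dq]

lemma Dq_succ (k : ℕ) : Dq q (k + 1) = Dq q k * (1 - q ^ (k + 1)) := by
  simp [Dq, Finset.prod_range_succ]

lemma factor_pos (hq0 : 0 < q) (hq1 : q < 1) (t : ℕ) : 0 < 1 - q ^ (t + 1) := by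
  have : q ^ (t + 1) < 1 := pow_lt_one₀ hq0.le hq1 (by omega)
  linarith

lemma factor_le_one (hq0 : 0 < q) (t : ℕ) : 1 - q ^ (t + 1) ≤ 1 := by
  have : 0 < q ^ (t + 1) := pow_pos hq0 _
  linarith

lemma Dq_pos (hq0 : 0 < q) (hq1 : q < 1) (k : ℕ) : 0 < Dq q k :=
  Finset.prod_pos fun t _ => factor_pos hq0 hq1 t

lemma Dq_ne (hq0 : 0 < q) (hq1 : q < 1) (k : ℕ) : Dq q k ≠ 0 :=
  (Dq_pos hq0 hq1 k).ne'

lemma Dq_le_one (hq0 : 0 < q) (hq1 : q < 1) (k : ℕ) : Dq q k ≤ 1 :=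
  Finset.prod_le_one (fun t _ => (factor_pos hq0 hq1 t).le) (fun t _ => factor_le_one hq0 t)

lemma Dq_add (k j : ℕ) : Dq q (k + j) = Dq q k * ∏ t ∈ Finset.range j, (1 - q ^ (k + t + 1)) := by
  simpa [Dq, add_assoc] using Finset.prod_range_add (fun t => (1 - q ^ (t + 1))) k j

lemma Dq_anti (hq0 : 0 < q) (hq1 : q < 1) {k l : ℕ} (h : k ≤ l) : Dq q l ≤ Dq q k := by
  obtain ⟨j, rfl⟩ := Nat.exists_eq_add_of_le h
  rw [Dq_add]
  have h1 : ∏ t ∈ Finset.range j, (1 - q ^ (k + t + 1)) ≤ 1 := by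
    apply Finset.prod_le_one
    · intro t _
      have : q ^ (k + t + 1) < 1 := pow_lt_one₀ hq0.le hq1 (by omega)
      linarith
    · intro t _
      have : 0 < q ^ (k + t + 1) := pow_pos hq0 _
      linarith
  nlinarith [Dq_pos hq0 hq1 k]

lemma gq_eq {m k : ℕ} (h : k ≤ m) : gq q m k = Dq q m / (Dq q (m - k) * Dq q k) := if_pos h

lemma gq_of_gt {m k : ℕ} (h : m < k) : gq q m k = 0 := if_neg (by omega)

lemma gq_zero (hq0 : 0 < q) (hq1 : q < 1) (m : ℕ) : gq q m 0 = 1 := by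
  rw [gq_eq (Nat.zero_le m)]
  simp [Dq_zero, div_self (Dq_ne hq0 hq1 m)]

lemma gq_self (hq0 : 0 < q) (hq1 : q < 1) (m : ℕ) : gq q m m = 1 := by
  rw [gq_eq le_rfl]
  simp [Dq_zero, div_self (Dq_ne hq0 hq1 m)]

lemma gq_one (hq0 : 0 < q) (hq1 : q < 1) (m : ℕ) :
    gq q (m + 1) 1 = (1 - q ^ (m + 1)) / (1 - q) := by
  rw [gq_eq (by omega)]
  have h1 : m + 1 - 1 = m := by omega
  rw [h1, Dq_succ]
  have hD1 : Dq q 1 = 1 - q := by simp [Dq, Finset.prod_range_one]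
  rw [hD1, mul_div_mul_left _ _ (Dq_ne hq0 hq1 m)]

lemma gq_symm (hq0 : 0 < q) (hq1 : q < 1) {m k : ℕ} (h : k ≤ m) :
    gq q m (m - k) = gq q m k := by
  rw [gq_eq (by omega), gq_eq h, show m - (m - k) = k by omega]
  ring

/-- The key three-term recurrence for Gaussian binomial values. -/
lemma gq_rec (hq0 : 0 < q) (hq1 : q < 1) (m i : ℕ) :
    gq q (m + 2) (i + 2) =
      q ^ (i + 2) * gq q m (i + 2) + (1 + q ^ (m + 1)) * gq q m (i + 1)
        + q ^ (m - i) * gq q m i := by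
  have hq := fun t => (factor_pos hq0 hq1 t).ne'
  rcases lt_or_ge m i with hmi | him
  · -- all terms vanish
    rw [gq_of_gt (by omega), gq_of_gt (by omega), gq_of_gt (by omega), gq_of_gt (by omega)]
    ring
  rcases eq_or_lt_of_le him with heq | him1
  · -- i = m
    subst heq
    have h1 : gq q (i + 2) (i + 2) = 1 := gq_self hq0 hq1 _
    have h2 : gq q i (i + 2) = 0 := gq_of_gt (by omega)
    have h3 : gq q i (i + 1) = 0 := gq_of_gt (by omega)
    have h4 : gq q i i = 1 := gq_self hq0 hq1 _
    rw [h1, h2, h3, h4, Nat.sub_self]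
    ring
  rcases eq_or_lt_of_le (by omega : i + 1 ≤ m) with hm | him2
  · -- m = i + 1
    subst hm
    have h1 : gq q (i + 1 + 2) (i + 2) = (1 - q ^ (i + 3)) / (1 - q) := by
      have hs := gq_symm hq0 hq1 (show 1 ≤ i + 3 by omega)
      rw [show i + 3 - 1 = i + 2 by omega] at hs
      rw [show i + 1 + 2 = i + 3 by ring, hs, show i + 3 = i + 2 + 1 by ring,
        gq_one hq0 hq1 (i + 2)]
    have h2 : gq q (i + 1) (i + 2) = 0 := gq_of_gt (by omega)
    have h3 : gq q (i + 1) (i + 1) = 1 := gq_self hq0 hq1 _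
    have h4 : gq q (i + 1) i = (1 - q ^ (i + 1)) / (1 - q) := by
      have hs := gq_symm hq0 hq1 (show 1 ≤ i + 1 by omega)
      rw [show i + 1 - 1 = i by omega] at hs
      rw [hs, gq_one hq0 hq1 i]
    rw [h1, h2, h3, h4, show i + 1 - i = 1 by omega]
    have e1 : q ^ (i + 3) = q ^ (i + 1) * q * q := by ring
    have e2 : q ^ (i + 1 + 1) = q ^ (i + 1) * q := by ring
    have e3 : q ^ (i + 2) = q ^ (i + 1) * q := by ring
    simp only [e1, e2, e3]
    have h1q : (1:ℝ) - q ≠ 0 := by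
      have := factor_pos hq0 hq1 0
      simpa using this.ne'
    field_simp
    ring
  · -- main case: i + 2 ≤ m
    obtain ⟨r, rfl⟩ : ∃ r, m = i + 2 + r := ⟨m - i - 2, by omega⟩
    rw [gq_eq (by omega : i + 2 ≤ i + 2 + r + 2), gq_eq (by omega : i + 2 ≤ i + 2 + r),
      gq_eq (by omega : i + 1 ≤ i + 2 + r), gq_eq (by omega : i ≤ i + 2 + r),
      show i + 2 + r + 2 - (i + 2) = r + 2 by omega,
      show i + 2 + r - (i + 2) = r by omega,
      show i + 2 + r - (i + 1) = r + 1 by omega,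
      show i + 2 + r - i = r + 2 by omega]
    -- expand all D's down to Dq q (i+2+r), Dq q r, Dq q i
    rw [show i + 2 + r + 2 = (i + 2 + r + 1) + 1 by ring, Dq_succ, Dq_succ,
      show r + 2 = (r + 1) + 1 by ring, Dq_succ (r+1), Dq_succ r,
      show i + 2 = (i + 1) + 1 by ring, Dq_succ (i+1), Dq_succ i]
    -- power normalizations: express everything via a := q^(i+1), b := q^(r+1)
    have e1 : q ^ (i + 1 + 1) = q ^ (i + 1) * q := by ring
    have e2 : q ^ (r + 1 + 1) = q ^ (r + 1) * q := by ring
    have e3 : q ^ (i + 2 + r + 1) = q ^ (i + 1) * q ^ (r + 1) * q := by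
      rw [← pow_add, ← pow_succ]; ring_nf
    have e4 : q ^ (i + 2 + r + 1 + 1) = q ^ (i + 1) * q ^ (r + 1) * q * q := by
      rw [← pow_add, ← pow_succ, ← pow_succ]; ring_nf
    have e5 : q ^ (i + 2) = q ^ (i + 1) * q := by ring
    simp only [e1, e2, e3, e4, e5]
    have hDi := Dq_ne hq0 hq1 i
    have hDr := Dq_ne hq0 hq1 r
    have hDm := Dq_ne hq0 hq1 (i + 2 + r)
    have f1 := hq i
    have f2 := hq r
    have hf1 : (1:ℝ) - q ^ (i + 1) ≠ 0 := f1
    have hf2 : (1:ℝ) - q ^ (r + 1) ≠ 0 := f2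
    have hf3 : (1:ℝ) - q ^ (i + 1) * q ≠ 0 := by rw [← e1]; exact hq (i + 1)
    have hf4 : (1:ℝ) - q ^ (r + 1) * q ≠ 0 := by rw [← e2]; exact hq (r + 1)
    have hf5 : (1:ℝ) - q ^ (i + 1) * q ^ (r + 1) * q ≠ 0 := by rw [← e3]; exact hq (i + 2 + r)
    have hf6 : (1:ℝ) - q ^ (i + 1) * q ^ (r + 1) * q * q ≠ 0 := by
      rw [← e4]; exact hq (i + 2 + r + 1)
    field_simp
    ring

/-- Exponent `(i-n)(i-n-1)/2` (an integer `≥ 0`). -/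
def Ee (n i : ℕ) : ℤ := ((i : ℤ) - n) * ((i : ℤ) - n - 1) / 2

lemma Ee_twice (n i : ℕ) : 2 * Ee n i = ((i : ℤ) - n) * ((i : ℤ) - n - 1) := by
  have h : Even (((i : ℤ) - n) * ((i : ℤ) - n - 1)) := by
    rcases Int.even_or_odd ((i : ℤ) - n) with h | h
    · exact h.mul_right _
    · have : Even (((i : ℤ) - n) - 1) := by
        rcases h with ⟨k, hk⟩
        exact ⟨k, by omega⟩
      exact this.mul_left _
  obtain ⟨k, hk⟩ := h
  rw [Ee, hk]
  omega

noncomputable def aq (q : ℝ) (n i : ℕ) : ℝ := q ^ (Ee n i) * gq q (2 * n + 1) i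

lemma zpow_helper {q : ℝ} (hq0 : 0 < q) (E F : ℤ) (c d : ℕ) (h : E + c = F + d) :
    q ^ E * q ^ c = q ^ (d : ℕ) * q ^ F := by
  have hne : q ≠ 0 := hq0.ne'
  rw [show q ^ c = q ^ (c : ℤ) from (zpow_natCast q c).symm,
    show q ^ (d : ℕ) = q ^ (d : ℤ) from (zpow_natCast q d).symm,
    ← zpow_add₀ hne, ← zpow_add₀ hne, h, add_comm]

lemma aq_of_big {q : ℝ} {n i : ℕ} (h : 2 * n + 2 ≤ i) : aq q n i = 0 := by
  rw [aq, gq_of_gt (by omega), mul_zero]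

/-- Main three-term recurrence for the coefficients `aq`. -/
lemma aq_rec (hq0 : 0 < q) (hq1 : q < 1) (n i : ℕ) :
    aq q (n + 1) (i + 2) =
      q ^ (n + 1) * aq q n (i + 2) + (1 + q ^ (2 * n + 2)) * aq q n (i + 1)
        + q ^ (n + 1) * aq q n i := by
  rcases lt_or_ge (2 * n + 1) i with hbig | hle
  · rw [aq_of_big (by omega), aq_of_big (by omega), aq_of_big (by omega), aq_of_big (by omega)]
    ring
  -- now i ≤ 2n+1
  unfold aq
  rw [show 2 * (n + 1) + 1 = (2 * n + 1) + 2 by ring, gq_rec hq0 hq1 (2 * n + 1) i]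
  rw [show (2 * n + 1) + 1 = 2 * n + 2 by ring]
  have key1 : q ^ (Ee (n + 1) (i + 2)) * q ^ (i + 2) = q ^ ((n+1 : ℕ)) * q ^ (Ee n (i + 2)) := by
    apply zpow_helper hq0
    have h1 := Ee_twice (n + 1) (i + 2)
    have h2 := Ee_twice n (i + 2)
    push_cast at h1 h2 ⊢
    nlinarith [h1, h2]
  have key2 : Ee (n + 1) (i + 2) = Ee n (i + 1) := by
    have h1 := Ee_twice (n + 1) (i + 2)
    have h2 := Ee_twice n (i + 1)
    push_cast at h1 h2
    nlinarith [h1, h2]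
  have key3 : q ^ (Ee (n + 1) (i + 2)) * q ^ (2 * n + 1 - i) =
      q ^ ((n+1 : ℕ)) * q ^ (Ee n i) := by
    apply zpow_helper hq0
    have h1 := Ee_twice (n + 1) (i + 2)
    have h2 := Ee_twice n i
    have hc : ((2 * n + 1 - i : ℕ) : ℤ) = 2 * (n : ℤ) + 1 - i := by omega
    rw [hc]
    push_cast at h1 h2 ⊢
    nlinarith [h1, h2]
  have key3' : q ^ (Ee n (i + 1)) * q ^ (2 * n + 1 - i) = q ^ ((n+1 : ℕ)) * q ^ (Ee n i) := by
    rw [← key2]; exact key3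
  rw [mul_add, mul_add, ← mul_assoc, ← mul_assoc, key1, key2]
  linear_combination (gq q (2 * n + 1) i) * key3'

lemma aq_b0 (hq0 : 0 < q) (hq1 : q < 1) (n : ℕ) :
    aq q (n + 1) 0 = q ^ (n + 1) * aq q n 0 := by
  unfold aq
  rw [gq_zero hq0 hq1, gq_zero hq0 hq1, mul_one, mul_one]
  have hne : q ≠ 0 := hq0.ne'
  rw [show q ^ ((n+1 : ℕ)) = q ^ ((n+1 : ℕ) : ℤ) from (zpow_natCast q (n+1)).symm,
    ← zpow_add₀ hne]
  congr 1
  have h1 := Ee_twice (n + 1) 0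
  have h2 := Ee_twice n 0
  push_cast at h1 h2 ⊢
  nlinarith [h1, h2]

lemma aq_b1 (hq0 : 0 < q) (hq1 : q < 1) (n : ℕ) :
    aq q (n + 1) 1 = q ^ (n + 1) * aq q n 1 + (1 + q ^ (2 * n + 2)) * aq q n 0 := by
  unfold aq
  rw [gq_zero hq0 hq1,
    show 2 * (n + 1) + 1 = (2 * n + 2) + 1 by ring, gq_one hq0 hq1 (2 * n + 2),
    show 2 * n + 1 = (2 * n) + 1 by ring, gq_one hq0 hq1 (2 * n)]
  have key1 : q ^ ((n+1:ℕ)) * q ^ (Ee n 1) = q * q ^ (Ee (n+1) 1) := by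
    have h : Ee n 1 + ((n+1 : ℕ) : ℤ) = Ee (n+1) 1 + ((1:ℕ) : ℤ) := by
      have h1 := Ee_twice n 1
      have h2 := Ee_twice (n + 1) 1
      have h3 : 2 * (Ee n 1 + ((n+1 : ℕ) : ℤ)) = 2 * (Ee (n+1) 1 + ((1:ℕ) : ℤ)) := by
        push_cast at h1 h2 ⊢
        linear_combination h1 - h2
      linarith
    have := zpow_helper hq0 (Ee n 1) (Ee (n+1) 1) (n+1) 1 h
    rw [pow_one] at this
    rw [mul_comm (q ^ ((n+1:ℕ)))]
    exact this
  have key2 : Ee (n + 1) 1 = Ee n 0 := by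
    have h1 := Ee_twice (n + 1) 1
    have h2 := Ee_twice n 0
    have h3 : 2 * Ee (n + 1) 1 = 2 * Ee n 0 := by
      push_cast at h1 h2 ⊢
      linear_combination h1 - h2
    linarith
  have h1q : (1:ℝ) - q ≠ 0 := by
    have := factor_pos hq0 hq1 0
    simpa using this.ne'
  rw [← key2, mul_one,
    show q ^ (n + 1) * (q ^ (Ee n 1) * ((1 - q ^ (2*n+1)) / (1 - q))) =
      (q ^ (n+1) * q ^ (Ee n 1)) * ((1 - q ^ (2*n+1)) / (1 - q)) by ring,
    key1]
  have hA : q ^ (Ee (n+1) 1) ≠ 0 := zpow_ne_zero _ hq0.ne'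
  rw [show q * q ^ (Ee (n+1) 1) * ((1 - q ^ (2*n+1)) / (1 - q)) =
      q ^ (Ee (n+1) 1) * (q * ((1 - q ^ (2*n+1)) / (1 - q))) by ring,
    show (1 + q ^ (2*n+2)) * q ^ (Ee (n+1) 1) = q ^ (Ee (n+1) 1) * (1 + q ^ (2*n+2)) by ring,
    ← mul_add]
  congr 1
  have e1 : q ^ (2*n+2+1) = q ^ (2*n+1) * q * q := by ring
  have e2 : q ^ (2*n+2) = q ^ (2*n+1) * q := by ring
  rw [e1, e2]
  field_simp
  ring

lemma sum_shift2 (g : ℕ → ℝ) (m : ℕ) :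
    ∑ i ∈ Finset.range (m + 2), g i = (∑ k ∈ Finset.range m, g (k + 2)) + g 1 + g 0 := by
  rw [Finset.sum_range_succ' g (m + 1), Finset.sum_range_succ' (fun i => g (i + 1)) m]

lemma Vn (hq0 : 0 < q) (hq1 : q < 1) : ∀ n : ℕ,
    ∑ i ∈ Finset.range (2 * n + 2), (-1 : ℝ) ^ i * aq q n i = 0 := by
  intro n
  induction n with
  | zero =>
    rw [show 2 * 0 + 2 = 2 by ring]
    rw [show (2 : ℕ) = 0 + 2 by ring, sum_shift2]
    simp only [Finset.range_zero, Finset.sum_empty]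
    have h0 : aq q 0 0 = 1 := by
      rw [aq, gq_zero hq0 hq1, mul_one, show Ee 0 0 = 0 by rfl, zpow_zero]
    have h1 : aq q 0 1 = 1 := by
      rw [aq, show 2 * 0 + 1 = 1 by ring, gq_self hq0 hq1, mul_one,
        show Ee 0 1 = 0 by rfl, zpow_zero]
    rw [h0, h1]
    ring
  | succ n IH =>
    have hS1 : ∑ k ∈ Finset.range (2 * n + 2), (-1 : ℝ) ^ k * aq q n (k + 1) = aq q n 0 := by
      have t1 : ∑ i ∈ Finset.range (2 * n + 3), (-1 : ℝ) ^ i * aq q n i = 0 := by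
        rw [show 2 * n + 3 = (2 * n + 2) + 1 by ring, Finset.sum_range_succ,
          aq_of_big (by omega), IH]
        ring
      have t2 := Finset.sum_range_succ' (fun i => (-1 : ℝ) ^ i * aq q n i) (2 * n + 2)
      rw [show (2 * n + 2) + 1 = 2 * n + 3 by ring] at t2
      rw [t1] at t2
      have t3 : ∑ k ∈ Finset.range (2 * n + 2), (-1 : ℝ) ^ (k + 1) * aq q n (k + 1)
          = -∑ k ∈ Finset.range (2 * n + 2), (-1 : ℝ) ^ k * aq q n (k + 1) := by
        rw [← Finset.sum_neg_distrib]
        apply Finset.sum_congr rfl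
        intro k _
        ring
      simp only [pow_zero, one_mul] at t2
      rw [t3] at t2
      linarith
    have hS2 : ∑ k ∈ Finset.range (2 * n + 2), (-1 : ℝ) ^ k * aq q n (k + 2)
        = aq q n 1 - aq q n 0 := by
      have t1 : ∑ i ∈ Finset.range (2 * n + 4), (-1 : ℝ) ^ i * aq q n i = 0 := by
        rw [show 2 * n + 4 = (2 * n + 3) + 1 by ring, Finset.sum_range_succ,
          show 2 * n + 3 = (2 * n + 2) + 1 by ring, Finset.sum_range_succ,
          aq_of_big (show 2 * n + 2 ≤ 2 * n + 2 by omega),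
          aq_of_big (show 2 * n + 2 ≤ 2 * n + 2 + 1 by omega), IH]
        ring
      have t2 := sum_shift2 (fun i => (-1 : ℝ) ^ i * aq q n i) (2 * n + 2)
      rw [show (2 * n + 2) + 2 = 2 * n + 4 by ring] at t2
      rw [t1] at t2
      have t3 : ∑ k ∈ Finset.range (2 * n + 2), (-1 : ℝ) ^ (k + 2) * aq q n (k + 2)
          = ∑ k ∈ Finset.range (2 * n + 2), (-1 : ℝ) ^ k * aq q n (k + 2) := by
        apply Finset.sum_congr rfl
        intro k _
        ring_nf
      simp only [pow_zero, pow_one, one_mul] at t2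
      rw [t3] at t2
      linarith
    rw [show 2 * (n + 1) + 2 = (2 * n + 2) + 2 by ring,
      sum_shift2 (fun i => (-1 : ℝ) ^ i * aq q (n + 1) i) (2 * n + 2)]
    have step1 : ∑ k ∈ Finset.range (2 * n + 2), (-1 : ℝ) ^ (k + 2) * aq q (n + 1) (k + 2)
        = q ^ (n + 1) * (∑ k ∈ Finset.range (2 * n + 2), (-1 : ℝ) ^ k * aq q n (k + 2))
          + (1 + q ^ (2 * n + 2)) * (∑ k ∈ Finset.range (2 * n + 2), (-1 : ℝ) ^ k * aq q n (k + 1))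
          + q ^ (n + 1) * (∑ k ∈ Finset.range (2 * n + 2), (-1 : ℝ) ^ k * aq q n k) := by
      rw [Finset.mul_sum, Finset.mul_sum, Finset.mul_sum, ← Finset.sum_add_distrib,
        ← Finset.sum_add_distrib]
      apply Finset.sum_congr rfl
      intro k _
      rw [aq_rec hq0 hq1 n k]
      ring
    rw [step1, hS1, hS2, IH, aq_b0 hq0 hq1 n, aq_b1 hq0 hq1 n]
    ring

lemma An (hq0 : 0 < q) (hq1 : q < 1) : ∀ n : ℕ,
    ∑ i ∈ Finset.range (2 * n + 2), (-1 : ℝ) ^ (i + 1) * (i : ℝ) * aq q n i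
      = (-1) ^ n * (Dq q n) ^ 2 := by
  intro n
  induction n with
  | zero =>
    rw [show 2 * 0 + 2 = 0 + 2 by ring, sum_shift2]
    simp only [Finset.range_zero, Finset.sum_empty]
    have h1 : aq q 0 1 = 1 := by
      rw [aq, show 2 * 0 + 1 = 1 by ring, gq_self hq0 hq1, mul_one,
        show Ee 0 1 = 0 by rfl, zpow_zero]
    rw [h1]
    simp [Dq_zero]
  | succ n IH =>
    have hV := Vn hq0 hq1 n
    -- U1
    have hU1 : ∑ k ∈ Finset.range (2 * n + 2), (-1 : ℝ) ^ (k + 1) * ((k : ℝ) + 2) * aq q n (k + 1)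
        = -((-1) ^ n * (Dq q n) ^ 2) - aq q n 0 := by
      have t1 : ∑ i ∈ Finset.range (2 * n + 3), (-1 : ℝ) ^ i * ((i : ℝ) + 1) * aq q n i
          = -((-1) ^ n * (Dq q n) ^ 2) := by
        rw [show 2 * n + 3 = (2 * n + 2) + 1 by ring, Finset.sum_range_succ,
          aq_of_big (by omega : 2 * n + 2 ≤ 2 * n + 2)]
        have expand : ∑ i ∈ Finset.range (2 * n + 2), (-1 : ℝ) ^ i * ((i : ℝ) + 1) * aq q n i
            = -(∑ i ∈ Finset.range (2 * n + 2), (-1 : ℝ) ^ (i + 1) * (i : ℝ) * aq q n i)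
              + ∑ i ∈ Finset.range (2 * n + 2), (-1 : ℝ) ^ i * aq q n i := by
          rw [← Finset.sum_neg_distrib, ← Finset.sum_add_distrib]
          apply Finset.sum_congr rfl
          intro i _
          ring
        rw [expand, IH, hV]
        ring
      have t2 := Finset.sum_range_succ' (fun i => (-1 : ℝ) ^ i * ((i : ℝ) + 1) * aq q n i)
        (2 * n + 2)
      rw [show (2 * n + 2) + 1 = 2 * n + 3 by ring] at t2
      rw [t1] at t2
      simp only [pow_zero, Nat.cast_zero, one_mul] at t2
      push_cast at t2
      -- t2 : -((-1)^n * Dq^2) = ∑ k, (-1)^(k+1) * (↑(k+1)+1) * aq n (k+1) + (0+1) * aq n 0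
      have t4 : ∑ k ∈ Finset.range (2 * n + 2),
            (-1 : ℝ) ^ (k + 1) * (((k : ℕ) + 1 : ℝ) + 1) * aq q n (k + 1)
          = ∑ k ∈ Finset.range (2 * n + 2), (-1 : ℝ) ^ (k + 1) * ((k : ℝ) + 2) * aq q n (k + 1) := by
        apply Finset.sum_congr rfl
        intro k _
        push_cast
        ring
      rw [t4] at t2
      linarith
    -- U2
    have hU2 : ∑ k ∈ Finset.range (2 * n + 2), (-1 : ℝ) ^ (k + 1) * ((k : ℝ) + 2) * aq q n (k + 2)
        = (-1) ^ n * (Dq q n) ^ 2 - aq q n 1 := by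
      have t1 : ∑ i ∈ Finset.range (2 * n + 4), (-1 : ℝ) ^ (i + 1) * (i : ℝ) * aq q n i
          = (-1) ^ n * (Dq q n) ^ 2 := by
        rw [show 2 * n + 4 = (2 * n + 3) + 1 by ring, Finset.sum_range_succ,
          show 2 * n + 3 = (2 * n + 2) + 1 by ring, Finset.sum_range_succ,
          aq_of_big (show 2 * n + 2 ≤ 2 * n + 2 by omega),
          aq_of_big (show 2 * n + 2 ≤ 2 * n + 2 + 1 by omega), IH]
        ring
      have t2 := sum_shift2 (fun i => (-1 : ℝ) ^ (i + 1) * (i : ℝ) * aq q n i) (2 * n + 2)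
      rw [show (2 * n + 2) + 2 = 2 * n + 4 by ring] at t2
      rw [t1] at t2
      simp only [Nat.cast_zero, mul_zero, zero_mul, add_zero, Nat.cast_one, mul_one] at t2
      push_cast at t2
      have t3 : ∑ k ∈ Finset.range (2 * n + 2),
            (-1 : ℝ) ^ (k + 2 + 1) * ((k : ℝ) + 2) * aq q n (k + 2)
          = ∑ k ∈ Finset.range (2 * n + 2), (-1 : ℝ) ^ (k + 1) * ((k : ℝ) + 2) * aq q n (k + 2) := by
        apply Finset.sum_congr rfl
        intro k _
        ring
      rw [t3] at t2
      norm_num at t2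
      linarith
    -- U0
    have hU0 : ∑ k ∈ Finset.range (2 * n + 2), (-1 : ℝ) ^ (k + 1) * ((k : ℝ) + 2) * aq q n k
        = (-1) ^ n * (Dq q n) ^ 2 := by
      have expand : ∑ k ∈ Finset.range (2 * n + 2), (-1 : ℝ) ^ (k + 1) * ((k : ℝ) + 2) * aq q n k
          = ∑ k ∈ Finset.range (2 * n + 2), (-1 : ℝ) ^ (k + 1) * (k : ℝ) * aq q n k
            + (-2 : ℝ) * ∑ k ∈ Finset.range (2 * n + 2), (-1 : ℝ) ^ k * aq q n k := by
        rw [Finset.mul_sum, ← Finset.sum_add_distrib]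
        apply Finset.sum_congr rfl
        intro k _
        ring
      rw [expand, IH, hV]
      ring
    -- assemble
    rw [show 2 * (n + 1) + 2 = (2 * n + 2) + 2 by ring,
      sum_shift2 (fun i => (-1 : ℝ) ^ (i + 1) * (i : ℝ) * aq q (n + 1) i) (2 * n + 2)]
    have step1 : ∑ k ∈ Finset.range (2 * n + 2),
          (-1 : ℝ) ^ (k + 2 + 1) * (((k : ℕ) + 2 : ℕ) : ℝ) * aq q (n + 1) (k + 2)
        = q ^ (n + 1) * (∑ k ∈ Finset.range (2 * n + 2),
              (-1 : ℝ) ^ (k + 1) * ((k : ℝ) + 2) * aq q n (k + 2))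
          + (1 + q ^ (2 * n + 2)) * (∑ k ∈ Finset.range (2 * n + 2),
              (-1 : ℝ) ^ (k + 1) * ((k : ℝ) + 2) * aq q n (k + 1))
          + q ^ (n + 1) * (∑ k ∈ Finset.range (2 * n + 2),
              (-1 : ℝ) ^ (k + 1) * ((k : ℝ) + 2) * aq q n k) := by
      rw [Finset.mul_sum, Finset.mul_sum, Finset.mul_sum, ← Finset.sum_add_distrib,
        ← Finset.sum_add_distrib]
      apply Finset.sum_congr rfl
      intro k _
      rw [aq_rec hq0 hq1 n k]
      push_cast
      ring
    simp only [Nat.cast_zero, mul_zero, zero_mul, add_zero, Nat.cast_one, mul_one]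
    rw [step1, hU0, hU1, hU2, aq_b1 hq0 hq1 n]
    rw [Dq_succ n]
    rw [show ((-1 : ℝ)) ^ (1 + 1) = 1 by ring]
    ring

lemma neg_one_pow_sub {j n : ℕ} (h : j ≤ n) : (-1 : ℝ) ^ (n - j) = (-1) ^ n * (-1) ^ j := by
  have hjj : (-1 : ℝ) ^ j * (-1) ^ j = 1 := by
    rw [← pow_add, show j + j = 2 * j by ring, pow_mul]
    norm_num
  have h1 : (-1 : ℝ) ^ (n - j) * (-1) ^ j = (-1) ^ n := by
    rw [← pow_add, show n - j + j = n by omega]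
  calc (-1 : ℝ) ^ (n - j) = (-1) ^ (n - j) * ((-1) ^ j * (-1) ^ j) := by rw [hjj, mul_one]
    _ = ((-1) ^ (n - j) * (-1) ^ j) * (-1) ^ j := by ring
    _ = (-1) ^ n * (-1) ^ j := by rw [h1]

lemma Ee_tri {n j : ℕ} (h : j ≤ n) :
    Ee n (n - j) = ((j * (j + 1) / 2 : ℕ) : ℤ) := by
  have h1 := Ee_twice n (n - j)
  have hc : ((n - j : ℕ) : ℤ) = (n : ℤ) - j := by omega
  rw [hc] at h1
  have h2 : (j * (j + 1) / 2 : ℕ) * 2 = j * (j + 1) :=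
    Nat.div_mul_cancel (Nat.even_mul_succ_self j).two_dvd
  have h3 : ((j * (j + 1) / 2 : ℕ) : ℤ) * 2 = (j : ℤ) * (j + 1) := by
    exact_mod_cast congrArg (Nat.cast : ℕ → ℤ) h2
  have h4 : 2 * Ee n (n - j) = (j : ℤ) * (j + 1) := by rw [h1]; ring
  linarith

lemma Ee_tri' (n j : ℕ) :
    Ee n (n + 1 + j) = ((j * (j + 1) / 2 : ℕ) : ℤ) := by
  have h1 := Ee_twice n (n + 1 + j)
  have h2 : (j * (j + 1) / 2 : ℕ) * 2 = j * (j + 1) :=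
    Nat.div_mul_cancel (Nat.even_mul_succ_self j).two_dvd
  have h3 : ((j * (j + 1) / 2 : ℕ) : ℤ) * 2 = (j : ℤ) * (j + 1) := by
    exact_mod_cast congrArg (Nat.cast : ℕ → ℤ) h2
  have h4 : 2 * Ee n (n + 1 + j) = (j : ℤ) * (j + 1) := by
    rw [h1]; push_cast; ring
  linarith

/-- The finite form of Jacobi's identity. -/
lemma finite_id (hq0 : 0 < q) (hq1 : q < 1) (n : ℕ) :
    ∑ j ∈ Finset.range (n + 1),
        (-1 : ℝ) ^ j * (2 * (j : ℝ) + 1) * q ^ (j * (j + 1) / 2) * gq q (2 * n + 1) (n - j)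
      = (Dq q n) ^ 2 := by
  have hA := An hq0 hq1 n
  rw [show 2 * n + 2 = (n + 1) + (n + 1) by ring,
    Finset.sum_range_add (fun i => (-1 : ℝ) ^ (i + 1) * (i : ℝ) * aq q n i) (n + 1) (n + 1)]
    at hA
  rw [← Finset.sum_range_reflect (fun i => (-1 : ℝ) ^ (i + 1) * (i : ℝ) * aq q n i) (n + 1),
    ← Finset.sum_add_distrib] at hA
  have key : ∀ j ∈ Finset.range (n + 1),
      ((-1 : ℝ) ^ ((n + 1 - 1 - j) + 1) * ((n + 1 - 1 - j : ℕ) : ℝ) * aq q n (n + 1 - 1 - j)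
        + (-1 : ℝ) ^ ((n + 1 + j) + 1) * ((n + 1 + j : ℕ) : ℝ) * aq q n (n + 1 + j))
      = (-1 : ℝ) ^ n *
        ((-1 : ℝ) ^ j * (2 * (j : ℝ) + 1) * q ^ (j * (j + 1) / 2) * gq q (2 * n + 1) (n - j)) := by
    intro j hj
    have hjn : j ≤ n := by simpa using Nat.lt_succ_iff.mp (Finset.mem_range.mp hj)
    have hnn : n + 1 - 1 - j = n - j := by omega
    rw [hnn]
    -- expand aq at both points
    have ha1 : aq q n (n - j) = q ^ (j * (j + 1) / 2) * gq q (2 * n + 1) (n - j) := by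
      rw [aq, Ee_tri hjn, zpow_natCast]
    have ha2 : aq q n (n + 1 + j) = q ^ (j * (j + 1) / 2) * gq q (2 * n + 1) (n - j) := by
      rw [aq, Ee_tri' n j, zpow_natCast]
      congr 1
      have hs := gq_symm hq0 hq1 (show n - j ≤ 2 * n + 1 by omega)
      rw [show 2 * n + 1 - (n - j) = n + 1 + j by omega] at hs
      exact hs
    rw [ha1, ha2]
    have hcast : ((n - j : ℕ) : ℝ) = (n : ℝ) - j := by
      rw [Nat.cast_sub hjn]
    have hsign1 : (-1 : ℝ) ^ (n - j + 1) = -((-1) ^ n * (-1) ^ j) := by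
      rw [pow_succ, neg_one_pow_sub hjn]; ring
    have hsign2 : (-1 : ℝ) ^ (n + 1 + j + 1) = (-1) ^ n * (-1) ^ j := by
      rw [show n + 1 + j + 1 = (n + j) + 2 by ring, pow_add, pow_add]
      norm_num
    rw [hcast, hsign1, hsign2]
    push_cast
    ring
  rw [Finset.sum_congr rfl key, ← Finset.mul_sum] at hA
  field_simp at hA
  exact hA

lemma summable_log1 (hq0 : 0 < q) (hq1 : q < 1) :
    Summable (fun k : ℕ => Real.log (1 - q ^ (k + 1))) := by
  apply Summable.of_norm_bounded (g := fun k => q ^ (k + 1) / (1 - q))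
  · apply Summable.div_const
    have := summable_geometric_of_lt_one hq0.le hq1
    exact (summable_nat_add_iff 1).mpr this
  · intro k
    have hx : 0 < q ^ (k + 1) := pow_pos hq0 _
    have hlt : q ^ (k + 1) < 1 := pow_lt_one₀ hq0.le hq1 (by omega)
    have hpos : 0 < 1 - q ^ (k + 1) := by linarith
    have hlog_le : Real.log (1 - q ^ (k + 1)) ≤ 0 := by
      apply Real.log_nonpos (by linarith) (by linarith)
    rw [Real.norm_eq_abs, abs_of_nonpos hlog_le]
    have h1 := Real.one_sub_inv_le_log_of_pos hpos
    have h2 : (1 - q ^ (k + 1))⁻¹ - 1 = q ^ (k + 1) / (1 - q ^ (k + 1)) := by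
      field_simp
      ring
    have h3 : -Real.log (1 - q ^ (k + 1)) ≤ q ^ (k + 1) / (1 - q ^ (k + 1)) := by
      rw [← h2]; linarith
    apply h3.trans
    have hq' : q ^ (k + 1) ≤ q := by
      simpa using pow_le_pow_of_le_one hq0.le hq1.le (show 1 ≤ k + 1 by omega)
    gcongr
    
lemma hasProd_D (hq0 : 0 < q) (hq1 : q < 1) :
    HasProd (fun k : ℕ => 1 - q ^ (k + 1)) (∏' k : ℕ, (1 - q ^ (k + 1))) := by
  have := (Real.multipliable_of_summable_log (fun k => factor_pos hq0 hq1 k)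
    (summable_log1 hq0 hq1)).hasProd
  exact this

lemma tendsto_D (hq0 : 0 < q) (hq1 : q < 1) :
    Filter.Tendsto (fun n => Dq q n) Filter.atTop (𝓝 (∏' k : ℕ, (1 - q ^ (k + 1)))) :=
  (hasProd_D hq0 hq1).tendsto_prod_nat

lemma P_pos (hq0 : 0 < q) (hq1 : q < 1) : 0 < ∏' k : ℕ, (1 - q ^ (k + 1)) := by
  have h2 : Real.exp (∑' k : ℕ, Real.log (1 - q ^ (k + 1))) = ∏' k : ℕ, (1 - q ^ (k + 1)) :=
    Real.rexp_tsum_eq_tprod (fun k => factor_pos hq0 hq1 k) (summable_log1 hq0 hq1)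
  rw [← h2]
  exact Real.exp_pos _

lemma P_le_D (hq0 : 0 < q) (hq1 : q < 1) (k : ℕ) :
    (∏' k : ℕ, (1 - q ^ (k + 1))) ≤ Dq q k := by
  apply le_of_tendsto (tendsto_D hq0 hq1)
  filter_upwards [Filter.eventually_ge_atTop k] with l hl
  exact Dq_anti hq0 hq1 hl

lemma summable_main (hq0 : 0 < q) (hq1 : q < 1) :
    Summable (fun j : ℕ => (2 * (j : ℝ) + 1) * q ^ (j * (j + 1) / 2)) := by
  apply Summable.of_nonneg_of_le
  · intro j
    positivity
  · intro j
    show (2 * (j : ℝ) + 1) * q ^ (j * (j + 1) / 2) ≤ (2 * (j : ℝ) + 1) * q ^ j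
    apply mul_le_mul_of_nonneg_left _ (by positivity)
    apply pow_le_pow_of_le_one hq0.le hq1.le
    rw [Nat.le_div_iff_mul_le (by norm_num)]
    rcases Nat.eq_zero_or_pos j with rfl | hj
    · simp
    · exact Nat.mul_le_mul (le_refl j) (by omega)
  · have h1 : Summable (fun j : ℕ => (j : ℝ) * q ^ j) := by
      have := summable_pow_mul_geometric_of_norm_lt_one (R := ℝ) 1
        (r := q) (by rw [Real.norm_eq_abs, abs_of_pos hq0]; exact hq1)
      simpa using this
    have h2 : Summable (fun j : ℕ => q ^ j) := summable_geometric_of_lt_one hq0.le hq1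
    have := (h1.mul_left 2).add h2
    apply this.congr
    intro j
    ring

open Filter in
lemma main_tsum (hq0 : 0 < q) (hq1 : q < 1) :
    ∑' j : ℕ, ((2 * (j : ℝ) + 1) * (-1) ^ j * q ^ (j * (j + 1) / 2))
      = (∏' k : ℕ, (1 - q ^ (k + 1))) ^ 3 := by
  set P := ∏' k : ℕ, (1 - q ^ (k + 1)) with hP
  have hPpos : 0 < P := P_pos hq0 hq1
  set c : ℕ → ℝ := fun j => (2 * (j : ℝ) + 1) * (-1) ^ j * q ^ (j * (j + 1) / 2) with hc
  set F : ℕ → ℕ → ℝ := fun n j =>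
    if j ≤ n then c j * gq q (2 * n + 1) (n - j) else 0 with hF
  have hgq_form : ∀ j n : ℕ, j ≤ n →
      gq q (2 * n + 1) (n - j) = Dq q (2 * n + 1) / (Dq q (n + 1 + j) * Dq q (n - j)) := by
    intro j n h
    rw [gq_eq (by omega), show 2 * n + 1 - (n - j) = n + 1 + j by omega]
  have htsumF : ∀ n, ∑' j, F n j = (Dq q n) ^ 2 := by
    intro n
    have hz : ∀ j ∉ Finset.range (n + 1), F n j = 0 := by
      intro j hj
      rw [Finset.mem_range] at hj
      simp only [hF]
      rw [if_neg (show ¬ j ≤ n by omega)]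
    rw [tsum_eq_sum hz, ← finite_id hq0 hq1 n]
    apply Finset.sum_congr rfl
    intro j hj
    have hjn : j ≤ n := by have := Finset.mem_range.mp hj; omega
    simp only [hF, if_pos hjn, hc]
    ring
  have hbound : ∀ n j, ‖F n j‖ ≤ ((2 * (j : ℝ) + 1) * q ^ (j * (j + 1) / 2)) * (P ^ 2)⁻¹ := by
    intro n j
    have hcabs : ‖c j‖ = (2 * (j : ℝ) + 1) * q ^ (j * (j + 1) / 2) := by
      rw [hc, Real.norm_eq_abs]
      simp only
      rw [abs_mul, abs_mul, abs_of_nonneg (by positivity : (0:ℝ) ≤ 2 * (j:ℝ) + 1),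
        abs_pow, abs_neg, abs_one, one_pow, mul_one,
        abs_of_nonneg (by positivity : (0:ℝ) ≤ q ^ (j * (j + 1) / 2))]
    rcases le_or_gt j n with hjn | hjn
    · simp only [hF, if_pos hjn]
      rw [hgq_form j n hjn]
      have hnum : Dq q (2 * n + 1) ≤ 1 := Dq_le_one hq0 hq1 _
      have hnum0 : 0 < Dq q (2 * n + 1) := Dq_pos hq0 hq1 _
      have hD1 := Dq_pos hq0 hq1 (n + 1 + j)
      have hD2 := Dq_pos hq0 hq1 (n - j)
      have hden : P * P ≤ Dq q (n + 1 + j) * Dq q (n - j) :=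
        mul_le_mul (P_le_D hq0 hq1 _) (P_le_D hq0 hq1 _) hPpos.le hD1.le
      have hgle : Dq q (2 * n + 1) / (Dq q (n + 1 + j) * Dq q (n - j)) ≤ (P ^ 2)⁻¹ := by
        rw [show (P ^ 2)⁻¹ = 1 / (P * P) by rw [sq, one_div]]
        exact div_le_div₀ (by norm_num) hnum (by positivity) hden
      have hgnn : 0 ≤ Dq q (2 * n + 1) / (Dq q (n + 1 + j) * Dq q (n - j)) := by positivity
      rw [norm_mul, hcabs, Real.norm_eq_abs, abs_of_nonneg hgnn]
      apply mul_le_mul_of_nonneg_left hgle (by positivity)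
    · have hFz : F n j = 0 := by
        simp only [hF]
        rw [if_neg (show ¬ j ≤ n by omega)]
      rw [hFz, norm_zero]
      positivity
  have hsummable_bound : Summable (fun j : ℕ =>
      ((2 * (j : ℝ) + 1) * q ^ (j * (j + 1) / 2)) * (P ^ 2)⁻¹) :=
    (summable_main hq0 hq1).mul_right _
  have h2n1 : Filter.Tendsto (fun n : ℕ => 2 * n + 1) atTop atTop :=
    Filter.tendsto_atTop_atTop.mpr (fun b => ⟨b, fun a ha => by omega⟩)
  have hn1j : ∀ j : ℕ, Filter.Tendsto (fun n : ℕ => n + 1 + j) atTop atTop :=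
    fun j => Filter.tendsto_atTop_atTop.mpr (fun b => ⟨b, fun a ha => by omega⟩)
  have hlim : ∀ j : ℕ, Filter.Tendsto (fun n => F n j) atTop (𝓝 (c j * P⁻¹)) := by
    intro j
    have hDlim := tendsto_D hq0 hq1
    have h1 : Filter.Tendsto (fun n : ℕ => Dq q (2 * n + 1)) atTop (𝓝 P) := hDlim.comp h2n1
    have h2 : Filter.Tendsto (fun n : ℕ => Dq q (n + 1 + j)) atTop (𝓝 P) := hDlim.comp (hn1j j)
    have h3 : Filter.Tendsto (fun n : ℕ => Dq q (n - j)) atTop (𝓝 P) :=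
      hDlim.comp (tendsto_sub_atTop_nat j)
    have h4 : Filter.Tendsto
        (fun n : ℕ => c j * (Dq q (2 * n + 1) / (Dq q (n + 1 + j) * Dq q (n - j))))
        atTop (𝓝 (c j * (P / (P * P)))) :=
      (h1.div (h2.mul h3) (by positivity)).const_mul _
    have heq : P / (P * P) = P⁻¹ := by
      field_simp
    rw [heq] at h4
    apply h4.congr'
    filter_upwards [Filter.eventually_ge_atTop j] with n hn
    simp only [hF, if_pos hn, hgq_form j n hn]
  have hmain := tendsto_tsum_of_dominated_convergence hsummable_bound hlim
    (Filter.Eventually.of_forall hbound)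
  have hD2lim : Filter.Tendsto (fun n => (Dq q n) ^ 2) atTop (𝓝 (P ^ 2)) :=
    (tendsto_D hq0 hq1).pow 2
  have hmain2 : Filter.Tendsto (fun n => (Dq q n) ^ 2) atTop (𝓝 (∑' j, c j * P⁻¹)) := by
    apply hmain.congr
    intro n
    exact htsumF n
  have huniq : ∑' j, c j * P⁻¹ = P ^ 2 := tendsto_nhds_unique hmain2 hD2lim
  rw [tsum_mul_right] at huniq
  have : (∑' j, c j) = P ^ 2 * P := by
    field_simp at huniq
    linarith [huniq]
  rw [hc] at this
  rw [this]
  ring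

end JTP

/-- Jacobi's triple product identity (special case): for `α > 1`, the series
`h(α) = Σ_{j=1}^∞ (2j-1)(-1)^{j-1} α^{-j(j-1)/2}` converges and equals
`∏_{k=1}^∞ (1 - α^{-k})^3`. (Here the series is reindexed by `j ↦ j+1`.) -/
theorem jacobi_triple_product (α : ℝ) (hα : 1 < α) :
    Multipliable (fun k : ℕ => (1 - α⁻¹ ^ (k + 1)) ^ 3) ∧
    HasSum (fun j : ℕ => (2 * (j : ℝ) + 1) * (-1) ^ j * α⁻¹ ^ (j * (j + 1) / 2))
      (∏' k : ℕ, (1 - α⁻¹ ^ (k + 1)) ^ 3) := by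
  have hq0 : 0 < α⁻¹ := inv_pos.mpr (by linarith)
  have hq1 : α⁻¹ < 1 := by
    rw [inv_lt_one_iff₀]
    right
    exact hα
  set q := α⁻¹ with hqdef
  have hProd := JTP.hasProd_D hq0 hq1
  have hProd3 : HasProd (fun k : ℕ => (1 - q ^ (k + 1)) ^ 3)
      ((∏' k : ℕ, (1 - q ^ (k + 1))) ^ 3) := by
    have heq : (fun k : ℕ => (1 - q ^ (k + 1)) ^ 3)
        = fun k => ((1 - q ^ (k + 1)) * (1 - q ^ (k + 1))) * (1 - q ^ (k + 1)) := by
      funext k; ring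
    rw [heq, show (∏' k : ℕ, (1 - q ^ (k + 1))) ^ 3
        = ((∏' k : ℕ, (1 - q ^ (k + 1))) * (∏' k : ℕ, (1 - q ^ (k + 1))))
          * (∏' k : ℕ, (1 - q ^ (k + 1))) by ring]
    exact (hProd.mul hProd).mul hProd
  constructor
  · exact ⟨_, hProd3⟩
  · have hsum : Summable (fun j : ℕ => (2 * (j : ℝ) + 1) * (-1) ^ j * q ^ (j * (j + 1) / 2)) := by
      apply Summable.of_norm_bounded (JTP.summable_main hq0 hq1)
      intro j
      rw [Real.norm_eq_abs, abs_mul, abs_mul,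
        abs_of_nonneg (by positivity : (0:ℝ) ≤ 2 * (j : ℝ) + 1), abs_pow, abs_neg, abs_one,
        one_pow, mul_one, abs_of_nonneg (by positivity : (0:ℝ) ≤ q ^ (j * (j + 1) / 2))]
    have h := hsum.hasSum
    rw [JTP.main_tsum hq0 hq1] at h
    rwa [hProd3.tprod_eq]
end

section
/- For α > 1, h(α) = Σ_{j=1}^∞ (2j−1)(−1)^{j−1} α^{−j(j−1)/2} is strictly positive. -/
open Real HurwitzZeta

namespace HPos

/-- The theta-like function term. -/
noncomputable def Gterm (t : ℝ) (j : ℕ) : ℝ :=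
  (-1) ^ j * (2 * (j : ℝ) + 1) * rexp (-π * (2 * (j : ℝ) + 1) ^ 2 * t)

noncomputable def G (t : ℝ) : ℝ := ∑' j : ℕ, Gterm t j

lemma hasSum_G_sin {t : ℝ} (ht : 0 < t) :
    HasSum (Gterm t) (sinKernel (1/4 : ℝ) t / 2) := by
  have h := hasSum_nat_sinKernel (1/4 : ℝ) ht
  have hinj : Function.Injective (fun j : ℕ => 2 * j + 1) := by
    intro a b hab
    simp only [] at hab
    omega
  have h0 : ∀ n ∉ Set.range (fun j : ℕ => 2 * j + 1),
      (2 * (n : ℝ) * Real.sin (2 * π * (1/4) * n) * rexp (-π * (n : ℝ) ^ 2 * t)) = 0 := by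
    intro n hn
    have hev : Even n := by
      rcases Nat.even_or_odd n with h | h
      · exact h
      · obtain ⟨k, hk⟩ := h
        exact absurd (Set.mem_range.mpr ⟨k, hk.symm⟩) hn
    obtain ⟨k, hk⟩ := hev
    have hs : Real.sin (2 * π * (1/4) * n) = 0 := by
      have h' : 2 * π * (1/4) * (n : ℝ) = k * π := by
        rw [hk]; push_cast; ring
      rw [h', Real.sin_nat_mul_pi]
    rw [hs]; ring
  have h2 := (hinj.hasSum_iff h0).mpr h
  have h3 := h2.div_const 2
  refine h3.congr_fun fun j => ?_
  show Gterm t j = 2 * ((2 * j + 1 : ℕ) : ℝ) * Real.sin (2 * π * (1/4) * ((2 * j + 1 : ℕ) : ℝ))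
      * rexp (-π * ((2 * j + 1 : ℕ) : ℝ) ^ 2 * t) / 2
  have hs : Real.sin (2 * π * (1/4) * ((2 * j + 1 : ℕ) : ℝ)) = (-1) ^ j := by
    have h' : 2 * π * (1/4) * ((2 * j + 1 : ℕ) : ℝ) = (j : ℝ) * π + π / 2 := by
      push_cast; ring
    rw [h', Real.sin_add_pi_div_two]
    simpa using Real.cos_nat_mul_pi_sub 0 j
  rw [hs]
  push_cast [Gterm]
  ring

/-- The natural-number/integer reindexing equivalence. -/
def e : ℕ ≃ ℤ where
  toFun j := if j % 2 = 0 then ((j / 2 : ℕ) : ℤ) else -((j / 2 : ℕ) : ℤ) - 1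
  invFun n := if 0 ≤ n then 2 * n.toNat else 2 * (-n - 1).toNat + 1
  left_inv j := by
    dsimp only
    by_cases h : j % 2 = 0
    · rw [if_pos h, if_pos (by positivity)]
      omega
    · rw [if_neg h, if_neg (by omega)]
      omega
  right_inv n := by
    dsimp only
    rcases le_or_gt 0 n with h | h
    · rw [if_pos h, if_pos (by omega)]
      omega
    · rw [if_neg (not_le.mpr h), if_neg (by omega)]
      omega

lemma hasSum_G_odd {x : ℝ} (hx : 0 < x) :
    HasSum (Gterm (x / 16)) (4 * oddKernel ((1:ℝ)/4 : ℝ) x) := by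
  have h := hasSum_int_oddKernel (1/4 : ℝ) hx
  have h2 := (Equiv.hasSum_iff e (f := fun n : ℤ =>
    ((n : ℝ) + 1/4) * rexp (-π * ((n : ℝ) + 1/4) ^ 2 * x))).mpr h
  have h3 := h2.mul_left 4
  refine h3.congr_fun fun j => ?_
  show Gterm (x/16) j = 4 * ((((e j : ℤ) : ℝ) + 1/4) * rexp (-π * (((e j : ℤ) : ℝ) + 1/4) ^ 2 * x))
  rcases Nat.even_or_odd j with ⟨k, hk⟩ | ⟨k, hk⟩
  · have hj : (e j : ℤ) = (k : ℤ) := by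
      have h1 : j % 2 = 0 := by omega
      have h2' : j / 2 = k := by omega
      simp [e, h1, h2']
      omega
    rw [hj]
    have hsign : ((-1 : ℝ)) ^ j = 1 := by
      rw [(by omega : j = 2 * k)]; simp [pow_mul]
    rw [Gterm, hsign, (by omega : j = 2 * k)]
    push_cast
    have harg : -π * (2 * (2 * (k:ℝ)) + 1) ^ 2 * (x / 16) = -π * ((k:ℝ) + 1/4) ^ 2 * x := by ring
    rw [harg]; ring
  · have hj : (e j : ℤ) = -(k : ℤ) - 1 := by
      have h1 : ¬ (j % 2 = 0) := by omega
      have h2' : j / 2 = k := by omega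
      simp [e, h1, h2']
      omega
    rw [hj]
    have hsign : ((-1 : ℝ)) ^ j = -1 := by
      rw [(by omega : j = 2 * k + 1)]; simp [pow_add, pow_mul]
    rw [Gterm, hsign, (by omega : j = 2 * k + 1)]
    push_cast
    have harg : -π * (2 * (2 * (k:ℝ) + 1) + 1) ^ 2 * (x / 16) =
        -π * (-(k:ℝ) - 1 + 1/4) ^ 2 * x := by ring
    rw [harg]; ring

end HPos

namespace HPos

lemma summable_G {t : ℝ} (ht : 0 < t) : Summable (Gterm t) := (hasSum_G_sin ht).summable

lemma G_scale {t : ℝ} (ht : 0 < t) : ∃ c : ℝ, 0 < c ∧ G t = c * G (1/(16*t)) := by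
  have h16 : (0:ℝ) < 16 * t := by linarith
  have h1 : G t = 4 * oddKernel ((1:ℝ)/4 : ℝ) (16*t) := by
    have h := (hasSum_G_odd h16).tsum_eq
    rw [show (16*t)/16 = t by ring] at h
    exact h
  have h2 : sinKernel ((1:ℝ)/4 : ℝ) (1/(16*t)) = 2 * G (1/(16*t)) := by
    have h := (hasSum_G_sin (show (0:ℝ) < 1/(16*t) by positivity)).tsum_eq
    rw [G, h]; ring
  rw [h1, oddKernel_functional_equation, h2]
  exact ⟨4 * (1 / (16*t) ^ (3/2:ℝ)) * 2, by positivity, by ring⟩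

lemma two_add_three_le (j : ℕ) : 2*j+3 ≤ 3^(j+1) := by
  induction j with
  | zero => norm_num
  | succ n ih => rw [pow_succ]; omega

lemma G_pos_of_quarter_le {t : ℝ} (ht : 1/4 ≤ t) : 0 < G t := by
  have ht0 : 0 < t := lt_of_lt_of_le (by norm_num) ht
  have hsum := summable_G ht0
  have h0 : G t = Gterm t 0 + ∑' j, Gterm t (j+1) := Summable.tsum_eq_zero_add hsum
  set c : ℝ := 3 * rexp (-(2*π)) with hc
  have hcpos : 0 < c := by positivity
  have hc1 : c < 1/2 := by
    have h7 : (7:ℝ) < rexp (2*π) := by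
      have h := Real.add_one_lt_exp (x := 2*π) (by positivity)
      nlinarith [Real.pi_gt_three]
    have h8 : rexp (-(2*π)) < 7⁻¹ := by
      rw [Real.exp_neg]
      exact inv_strictAnti₀ (by norm_num) h7
    rw [hc]
    nlinarith
  have habs : ∀ j, |Gterm t j| = (2*(j:ℝ)+1) * rexp (-π * (2*(j:ℝ)+1)^2 * t) := by
    intro j
    rw [Gterm, abs_mul, abs_mul, abs_pow, abs_neg, abs_one, one_pow, one_mul,
      abs_of_nonneg (by positivity), abs_of_nonneg (Real.exp_pos _).le]
  have key : ∀ j : ℕ, |Gterm t (j+1)| ≤ rexp (-π*t) * c^(j+1) := by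
    intro j
    rw [habs]
    have e1 : rexp (-π * (2*((j+1:ℕ):ℝ)+1)^2 * t)
        = rexp (-π*t) * rexp (-(π * ((2*(j:ℝ)+3)^2 - 1) * t)) := by
      rw [← Real.exp_add]; congr 1; push_cast; ring
    have e2 : rexp (-(π * ((2*(j:ℝ)+3)^2 - 1) * t)) ≤ rexp (-(2*π*((j:ℝ)+1))) := by
      apply Real.exp_le_exp.mpr
      have hj : (0:ℝ) ≤ (j:ℝ) := Nat.cast_nonneg j
      nlinarith [mul_nonneg (mul_nonneg Real.pi_pos.le
          (by nlinarith : (0:ℝ) ≤ 4*(j:ℝ)^2+12*(j:ℝ)+8)) (by linarith : (0:ℝ) ≤ t - 1/4),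
        mul_nonneg Real.pi_pos.le (mul_nonneg hj hj), mul_nonneg Real.pi_pos.le hj]
    have e3 : (2*((j+1:ℕ):ℝ)+1) ≤ 3^(j+1) := by
      have := two_add_three_le j
      have h' : ((2*j+3 : ℕ) : ℝ) ≤ ((3^(j+1) : ℕ) : ℝ) := Nat.cast_le.mpr this
      push_cast at h' ⊢
      linarith
    have e4 : c^(j+1) = 3^(j+1) * rexp (-(2*π*((j:ℝ)+1))) := by
      rw [hc, mul_pow, ← Real.exp_nat_mul]
      congr 1
      push_cast
      ring
    calc (2*((j+1:ℕ):ℝ)+1) * rexp (-π * (2*((j+1:ℕ):ℝ)+1)^2 * t)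
        = (2*((j+1:ℕ):ℝ)+1) * (rexp (-π*t) * rexp (-(π * ((2*(j:ℝ)+3)^2 - 1) * t))) := by
          rw [e1]
      _ ≤ 3^(j+1) * (rexp (-π*t) * rexp (-(2*π*((j:ℝ)+1)))) := by
          apply mul_le_mul e3 (by gcongr) (by positivity) (by positivity)
      _ = rexp (-π*t) * c^(j+1) := by rw [e4]; ring
  have hmaj : Summable (fun j : ℕ => rexp (-π*t) * c^(j+1)) := by
    apply Summable.mul_left
    have := (summable_geometric_of_lt_one hcpos.le (by linarith)).mul_left c
    refine this.congr fun j => ?_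
    rw [pow_succ]; ring
  have habsum : Summable (fun j : ℕ => |Gterm t (j+1)|) :=
    Summable.of_nonneg_of_le (fun j => abs_nonneg _) key hmaj
  have hS : |∑' j, Gterm t (j+1)| ≤ rexp (-π*t) * (c * (1-c)⁻¹) := by
    calc |∑' j, Gterm t (j+1)| ≤ ∑' j, |Gterm t (j+1)| := by
          simpa using norm_tsum_le_tsum_norm (f := fun j => Gterm t (j+1)) (by simpa using habsum)
      _ ≤ ∑' j : ℕ, rexp (-π*t) * c^(j+1) := Summable.tsum_le_tsum key habsum hmaj
      _ = rexp (-π*t) * (c * (1-c)⁻¹) := by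
          rw [tsum_mul_left]
          congr 1
          rw [← tsum_geometric_of_lt_one hcpos.le (by linarith), ← tsum_mul_left]
          exact tsum_congr fun j => by rw [pow_succ]; ring
  have hG0 : Gterm t 0 = rexp (-π*t) := by
    rw [Gterm]; norm_num
  have hfrac : c * (1-c)⁻¹ < 1 := by
    rw [mul_inv_lt_iff₀ (by linarith)]
    linarith
  have := abs_le.mp hS
  have hexp : (0:ℝ) < rexp (-π*t) := Real.exp_pos _
  rw [h0, hG0]
  nlinarith [this.1]

lemma G_pos {t : ℝ} (ht : 0 < t) : 0 < G t := by
  rcases le_or_gt (1/4) t with h | h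
  · exact G_pos_of_quarter_le h
  · obtain ⟨c, hcpos, heq⟩ := G_scale ht
    rw [heq]
    refine mul_pos hcpos (G_pos_of_quarter_le ?_)
    have h16 : (0:ℝ) < 16 * t := by linarith
    exact one_div_le_one_div_of_le h16 (by linarith)

end HPos

/-- For `α > 1`, `h(α) = Σ_{j=1}^∞ (2j-1)(-1)^{j-1} α^{-j(j-1)/2}` is strictly positive.
(The series is reindexed by `j ↦ j+1`.) -/
theorem h_pos (α : ℝ) (hα : 1 < α) :
    0 < ∑' j : ℕ, (2 * (j : ℝ) + 1) * (-1) ^ j * α⁻¹ ^ (j * (j + 1) / 2) := by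
  have hα0 : 0 < α := lt_trans one_pos hα
  have hlog : 0 < Real.log α := Real.log_pos hα
  have hπ := Real.pi_pos
  set t : ℝ := Real.log α / (8*π) with htdef
  have ht : 0 < t := by positivity
  have key : ∀ j : ℕ, (2*(j:ℝ)+1) * (-1)^j * α⁻¹ ^ (j*(j+1)/2)
      = rexp (π * t) * HPos.Gterm t j := by
    intro j
    have hm : ((j*(j+1)/2 : ℕ) : ℝ) = (j:ℝ)*((j:ℝ)+1)/2 := by
      rw [Nat.cast_div (Nat.even_mul_succ_self j).two_dvd (by norm_num)]
      push_cast; ring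
    have hinv : α⁻¹ ^ (j*(j+1)/2) = rexp (((j*(j+1)/2 : ℕ) : ℝ) * Real.log α⁻¹) := by
      rw [show α⁻¹ = rexp (Real.log α⁻¹) from (Real.exp_log (inv_pos.mpr hα0)).symm,
        ← Real.exp_nat_mul, Real.log_exp]
    have harg : ((j*(j+1)/2 : ℕ) : ℝ) * Real.log α⁻¹
        = π * t + -π * (2*(j:ℝ)+1)^2 * t := by
      rw [hm, Real.log_inv, htdef]
      field_simp
      ring
    rw [hinv, harg, Real.exp_add, HPos.Gterm]
    ring
  calc (0:ℝ) < rexp (π * t) * HPos.G t := mul_pos (Real.exp_pos _) (HPos.G_pos ht)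
    _ = ∑' j : ℕ, rexp (π * t) * HPos.Gterm t j := (tsum_mul_left).symm
    _ = ∑' j : ℕ, (2*(j:ℝ)+1) * (-1)^j * α⁻¹ ^ (j*(j+1)/2) := tsum_congr fun j => (key j).symm
end

section
/- Let 0 < q < 1, f the deformed exponential function with zeros x_{n+1} < x_n < 0 satisfying x_{n+1} < x_n/q, and suppose f(x) = ∏_{n=1}^∞ (1 − x/x_n). Then the critical points of f are exactly the points x_n/q, and the signs of the extrema alternate: (−1)^n f(x_n/q) > 0 for all n ≥ 1. -/
/-- Let `0 < q < 1`, `f` the deformed exponential function (on `ℝ`) with zeros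
`x_{n+1} < x_n/q < x_n < 0` (`n ≥ 1`), satisfying `f' (y) = f(qy)` and
`f(y) = ∏_{n=1}^∞ (1 - y/x_n)`. Then the critical points of `f` are exactly the points
`x_n/q`, and the signs of the extrema alternate: `(-1)^n f(x_n/q) > 0` for all `n ≥ 1`. -/
theorem critical_points_alternate (q : ℝ) (hq0 : 0 < q) (hq1 : q < 1)
    (f : ℝ → ℝ)
    (hf : ∀ y : ℝ, f y = ∑' n : ℕ, y ^ n * q ^ (n * (n - 1) / 2) / (n.factorial : ℝ))
    (hderiv : ∀ y : ℝ, HasDerivAt f (f (q * y)) y)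
    (x : ℕ → ℝ)
    (hxlt : ∀ n : ℕ, 1 ≤ n → x (n + 1) < x n / q ∧ x n / q < x n ∧ x n < 0)
    (hzeros : ∀ y : ℝ, f y = 0 ↔ ∃ n : ℕ, 1 ≤ n ∧ y = x n)
    (hprod : ∀ y : ℝ, f y = ∏' n : ℕ, (1 - y / x (n + 1))) :
    (∀ y : ℝ, deriv f y = 0 ↔ ∃ n : ℕ, 1 ≤ n ∧ y = x n / q)
      ∧ ∀ n : ℕ, 1 ≤ n → 0 < (-1 : ℝ) ^ n * f (x n / q) := by
  have hq0' : q ≠ 0 := ne_of_gt hq0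
  have hcont : Continuous f :=
    continuous_iff_continuousAt.2 fun y => (hderiv y).differentiableAt.continuousAt
  -- f 0 = 1
  have hf0 : f 0 = 1 := by
    rw [hf, tsum_eq_single 0 (by intro n hn; simp [zero_pow hn])]
    norm_num
  -- successive zeros decrease
  have hstep : ∀ k : ℕ, 1 ≤ k → x (k + 1) < x k := by
    intro k hk
    have h := hxlt k hk
    linarith [h.1, h.2.1]
  -- antitone
  have hmono : ∀ m n : ℕ, 1 ≤ m → m ≤ n → x n ≤ x m := by
    intro m n hm hmn
    induction n with
    | zero => omega
    | succ k ih =>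
      rcases Nat.lt_or_ge m (k + 1) with h | h
      · have hk : 1 ≤ k := by omega
        exact le_trans (le_of_lt (hstep k hk)) (ih (by omega))
      · have : m = k + 1 := by omega
        simp [this]
  -- zeros
  have hzero' : ∀ k : ℕ, 1 ≤ k → f (x k) = 0 := fun k hk => (hzeros (x k)).2 ⟨k, hk, rfl⟩
  -- the intervals
  set S : ℕ → Set ℝ := fun n =>
    match n with
    | 0 => Set.Ioi (x 1)
    | k + 1 => Set.Ioo (x (k + 2)) (x (k + 1)) with hS
  have hord : ∀ n : ℕ, (S n).OrdConnected := by
    intro n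
    match n with
    | 0 => exact Set.ordConnected_Ioi
    | k + 1 => exact Set.ordConnected_Ioo
  have hne : ∀ n : ℕ, ∀ y ∈ S n, f y ≠ 0 := by
    intro n y hy hfy
    obtain ⟨k, hk, rfl⟩ := (hzeros y).1 hfy
    match n with
    | 0 =>
      have : x k ≤ x 1 := hmono 1 k le_rfl hk
      have hy' : x 1 < x k := hy
      linarith
    | m + 1 =>
      obtain ⟨h1, h2⟩ := hy
      rcases Nat.lt_or_ge k (m + 2) with h | h
      · have : x (m + 1) ≤ x k := hmono k (m + 1) hk (by omega)
        linarith
      · have : x k ≤ x (m + 2) := hmono (m + 2) k (by omega) h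
        linarith
  -- sign constancy on ord-connected zero-free sets
  have const : ∀ (s : Set ℝ), s.OrdConnected → (∀ y ∈ s, f y ≠ 0) →
      ∀ ε : ℝ, ∀ a ∈ s, ∀ b ∈ s, 0 < ε * f a → 0 < ε * f b := by
    intro s hs hsne ε a ha b hb hfa
    have hε : ε ≠ 0 := by
      intro h; rw [h] at hfa; simp at hfa
    by_contra hfb
    have hfb' : ε * f b < 0 := by
      rcases lt_or_eq_of_le (not_lt.1 hfb) with h | h
      · exact h
      · exact absurd (by
          have := mul_eq_zero.1 h
          tauto) (hsne b hb)
    have hcg : ContinuousOn (fun y => ε * f y) (Set.uIcc b a) :=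
      (continuous_const.mul hcont).continuousOn
    have h0 : (0 : ℝ) ∈ Set.uIcc (ε * f b) (ε * f a) :=
      Set.mem_uIcc.2 (Or.inl ⟨le_of_lt hfb', le_of_lt hfa⟩)
    obtain ⟨c, hc, hgc⟩ := intermediate_value_uIcc hcg h0
    have hcs : c ∈ s := hs.uIcc_subset hb ha hc
    exact hsne c hcs (by
      have : ε * f c = 0 := hgc
      rcases mul_eq_zero.1 this with h | h
      · exact absurd h hε
      · exact h)
  -- crossing lemma via the derivative
  have key : ∀ (n : ℕ) (a c : ℝ), HasDerivAt f c a → f a = 0 → 0 < (-1 : ℝ) ^ n * c →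
      ∀ b : ℝ, b < a → ∃ y : ℝ, b < y ∧ y < a ∧ 0 < (-1 : ℝ) ^ (n + 1) * f y := by
    intro n a c hd hfa hc b hba
    have hslope : Filter.Tendsto (fun y => (-1 : ℝ) ^ n * slope f a y) (nhdsWithin a {a}ᶜ)
        (nhds ((-1 : ℝ) ^ n * c)) :=
      (hasDerivAt_iff_tendsto_slope.1 hd).const_mul _
    have hev : ∀ᶠ y in nhdsWithin a {a}ᶜ, 0 < (-1 : ℝ) ^ n * slope f a y :=
      hslope.eventually (lt_mem_nhds hc)
    have hle : nhdsWithin a (Set.Iio a) ≤ nhdsWithin a {a}ᶜ :=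
      nhdsWithin_mono a (fun y hy => ne_of_lt hy)
    have hev1 : ∀ᶠ y in nhdsWithin a (Set.Iio a), 0 < (-1 : ℝ) ^ n * slope f a y := hle hev
    have hev2 : ∀ᶠ y in nhdsWithin a (Set.Iio a), b < y :=
      eventually_nhdsWithin_of_eventually_nhds (eventually_gt_nhds hba)
    have hev3 : ∀ᶠ y in nhdsWithin a (Set.Iio a), y < a := eventually_mem_nhdsWithin
    have : ∃ y, (0 < (-1 : ℝ) ^ n * slope f a y ∧ b < y) ∧ y < a :=
      ((hev1.and hev2).and hev3).exists
    obtain ⟨y, ⟨hy1, hy2⟩, hy3⟩ := this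
    refine ⟨y, hy2, hy3, ?_⟩
    have hya : y - a < 0 := by linarith
    have hslope_eq : slope f a y = f y / (y - a) := by
      rw [slope_def_field, hfa]
      ring
    rw [hslope_eq] at hy1
    have hneg : (-1 : ℝ) ^ n * f y < 0 := by
      have h' : 0 < (-1 : ℝ) ^ n * f y / (y - a) := by rw [mul_div_assoc]; exact hy1
      rcases div_pos_iff.1 h' with ⟨_, h2⟩ | ⟨h1, _⟩
      · linarith
      · exact h1
    have : (-1 : ℝ) ^ (n + 1) * f y = -((-1 : ℝ) ^ n * f y) := by ring
    rw [this]
    linarith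
  -- q * x (n+1) lands in S n
  have hqmem : ∀ n : ℕ, q * x (n + 1) ∈ S n := by
    intro n
    have h := hxlt (n + 1) (by omega)
    have hx1 : x (n + 1) < 0 := h.2.2
    have hlow : x (n + 1) < q * x (n + 1) := by nlinarith
    match n with
    | 0 => exact hlow
    | k + 1 =>
      have h' := hxlt (k + 1) (by omega)
      have hup : q * x (k + 2) < x (k + 1) := by
        have := h'.1
        rw [lt_div_iff₀ hq0] at this
        linarith [this]
      exact ⟨hlow, hup⟩
  -- main sign claim
  have main : ∀ n : ℕ, ∀ y ∈ S n, 0 < (-1 : ℝ) ^ n * f y := by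
    intro n
    induction n with
    | zero =>
      intro y hy
      have h0mem : (0 : ℝ) ∈ S 0 := by
        have := (hxlt 1 le_rfl).2.2
        exact this
      have : 0 < (1 : ℝ) * f 0 := by rw [hf0]; norm_num
      have := const (S 0) (hord 0) (hne 0) 1 0 h0mem y hy this
      simpa using this
    | succ n ih =>
      intro y hy
      have hc : 0 < (-1 : ℝ) ^ n * f (q * x (n + 1)) := ih _ (hqmem n)
      have hfa : f (x (n + 1)) = 0 := hzero' (n + 1) (by omega)
      have hb : x (n + 2) < x (n + 1) := hstep (n + 1) (by omega)
      obtain ⟨y₀, hy₀1, hy₀2, hy₀3⟩ :=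
        key n (x (n + 1)) (f (q * x (n + 1))) (hderiv (x (n + 1))) hfa hc (x (n + 2)) hb
      have hy₀mem : y₀ ∈ S (n + 1) := ⟨hy₀1, hy₀2⟩
      exact const (S (n + 1)) (hord (n + 1)) (hne (n + 1)) ((-1 : ℝ) ^ (n + 1)) y₀ hy₀mem y hy hy₀3
  constructor
  · intro y
    rw [(hderiv y).deriv, hzeros (q * y)]
    constructor
    · rintro ⟨n, hn, h⟩
      exact ⟨n, hn, by rw [eq_div_iff hq0']; linarith [mul_comm q y]⟩
    · rintro ⟨n, hn, h⟩
      refine ⟨n, hn, ?_⟩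
      rw [h]
      field_simp
  · intro n hn
    obtain ⟨k, rfl⟩ : ∃ k, n = k + 1 := ⟨n - 1, by omega⟩
    have h := hxlt (k + 1) hn
    exact main (k + 1) _ ⟨h.1, h.2.1⟩
end

section
/- Let α > 1 and λ > 0, and for integers k ≥ 1 set u_n = (k + λ/k)^n α^{n(2k−n−1)/2}/n! and v_j = u_{2k−1−j} − u_j. Then for each fixed integer j ≥ 0, as k → ∞, v_{k−j} = ((k + λ/k)^{k+j−3}/(k+j−1)!) · [(2j−1)λ + j(j−1)(2j−1)/6 + O(1/k)] · α^{(k+j−1)(k−j)/2}. -/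
open Filter Asymptotics Real

lemma coeff_mul_one' (p q : Polynomial ℝ) :
    (p*q).coeff 1 = p.coeff 0 * q.coeff 1 + p.coeff 1 * q.coeff 0 := by
  rw [Polynomial.coeff_mul, show (Finset.HasAntidiagonal.antidiagonal 1 : Finset (ℕ×ℕ)) = {(0,1),(1,0)} by decide]
  simp

lemma sum_range_sq' (j : ℕ) :
    ∑ i ∈ Finset.range j, (i:ℝ)^2 = (j:ℝ)*((j:ℝ)-1)*(2*(j:ℝ)-1)/6 := by
  induction j with
  | zero => simp
  | succ n ih => rw [Finset.sum_range_succ, ih]; push_cast; ring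

lemma fact_ratio' (j : ℕ) : ∀ k : ℕ, j ≤ k → 1 ≤ k →
    ((k + j - 1).factorial : ℝ) * k
      = ((k - j).factorial : ℝ) * ∏ i ∈ Finset.range j, ((k:ℝ)^2 - (i:ℝ)^2) := by
  induction j with
  | zero =>
    intro k hjk hk
    simp only [Finset.range_zero, Finset.prod_empty, mul_one, Nat.add_zero, Nat.sub_zero]
    rw [← Nat.cast_mul]
    rw [mul_comm, Nat.mul_factorial_pred (by omega)]
  | succ j ih =>
    intro k hjk hk
    have hj : j ≤ k := by omega
    have e1 : k + (j+1) - 1 = (k + j - 1) + 1 := by omega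
    have e2 : k - j = (k - (j+1)) + 1 := by omega
    have ihk := ih k hj hk
    rw [e2, Nat.factorial_succ] at ihk
    rw [e1, Nat.factorial_succ, Finset.prod_range_succ]
    have c1 : ((k + j - 1 : ℕ) : ℝ) + 1 = (k:ℝ) + (j:ℝ) := by
      rw [Nat.cast_sub (by omega : 1 ≤ k + j)]; push_cast; ring
    have c2 : ((k - (j+1) : ℕ) : ℝ) + 1 = (k:ℝ) - (j:ℝ) := by
      rw [Nat.cast_sub hjk]; push_cast; ring
    push_cast at ihk ⊢
    rw [c2] at ihk
    rw [c1]
    linear_combination ((k:ℝ) + (j:ℝ)) * ihk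

lemma B_coeff (lam : ℝ) (n : ℕ) :
    ((1 + Polynomial.C lam * Polynomial.X)^n).coeff 0 = 1 ∧
      ((1 + Polynomial.C lam * Polynomial.X)^n).coeff 1 = n * lam := by
  have hB0 : (1 + Polynomial.C lam * Polynomial.X).coeff 0 = 1 := by simp
  have hB1 : (1 + Polynomial.C lam * Polynomial.X).coeff 1 = lam := by
    rw [Polynomial.coeff_add, Polynomial.coeff_one, Polynomial.coeff_C_mul,
      Polynomial.coeff_X_one]; simp
  induction n with
  | zero => rw [pow_zero]; constructor <;> (rw [Polynomial.coeff_one]; simp)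
  | succ m ihm =>
    rw [pow_succ]
    constructor
    · rw [Polynomial.mul_coeff_zero, ihm.1, hB0]; ring
    · rw [coeff_mul_one', ihm.1, ihm.2, hB0, hB1]; push_cast; ring

lemma Q_coeff (j : ℕ) :
    (∏ i ∈ Finset.range j, (1 - Polynomial.C ((i:ℝ)^2) * Polynomial.X)).coeff 0 = 1 ∧
      (∏ i ∈ Finset.range j, (1 - Polynomial.C ((i:ℝ)^2) * Polynomial.X)).coeff 1
        = - ∑ i ∈ Finset.range j, (i:ℝ)^2 := by
  have h0 : ∀ m : ℕ, (1 - Polynomial.C ((m:ℝ)^2) * Polynomial.X).coeff 0 = 1 := by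
    intro m
    rw [Polynomial.coeff_sub, Polynomial.coeff_one, Polynomial.coeff_C_mul,
      Polynomial.coeff_X_zero]; simp
  have h1 : ∀ m : ℕ, (1 - Polynomial.C ((m:ℝ)^2) * Polynomial.X).coeff 1 = -(m:ℝ)^2 := by
    intro m
    rw [Polynomial.coeff_sub, Polynomial.coeff_one, Polynomial.coeff_C_mul,
      Polynomial.coeff_X_one]; simp
  induction j with
  | zero =>
    rw [Finset.range_zero, Finset.prod_empty, Finset.sum_empty]
    constructor <;> (rw [Polynomial.coeff_one]; simp)
  | succ m ihm =>
    rw [Finset.prod_range_succ, Finset.sum_range_succ]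
    constructor
    · rw [Polynomial.mul_coeff_zero, ihm.1, h0]; ring
    · rw [coeff_mul_one', ihm.1, ihm.2, h0, h1]; ring

/-- Let `α > 1`, `λ > 0`, and for integers `k ≥ 1` set
`u_n = (k + λ/k)^n α^{n(2k-n-1)/2}/n!` and `v_j = u_{2k-1-j} - u_j`. Then for each fixed
integer `j ≥ 0`, as `k → ∞`,
`v_{k-j} = ((k + λ/k)^{k+j-3}/(k+j-1)!) · [(2j-1)λ + j(j-1)(2j-1)/6 + O(1/k)] · α^{(k+j-1)(k-j)/2}`. -/
theorem v_asymptotic (α lam : ℝ) (hα : 1 < α) (hlam : 0 < lam)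
    (u : ℕ → ℕ → ℝ)
    (hu : ∀ k n : ℕ, 1 ≤ k → u k n = ((k : ℝ) + lam / (k : ℝ)) ^ n
      * α ^ (((n : ℝ) * (2 * (k : ℝ) - (n : ℝ) - 1)) / 2) / (n.factorial : ℝ))
    (v : ℕ → ℕ → ℝ)
    (hv : ∀ k i : ℕ, 1 ≤ k → v k i = u k (2 * k - 1 - i) - u k i)
    (j : ℕ) :
    ∃ E : ℕ → ℝ, (E =O[atTop] fun k : ℕ => ((k : ℝ))⁻¹) ∧
      ∀ᶠ k : ℕ in atTop,
        v k (k - j) = ((k : ℝ) + lam / (k : ℝ)) ^ (k + j - 3) / (((k + j - 1).factorial : ℝ))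
          * ((2 * (j : ℝ) - 1) * lam + (j : ℝ) * ((j : ℝ) - 1) * (2 * (j : ℝ) - 1) / 6 + E k)
          * α ^ ((((k : ℝ) + (j : ℝ) - 1) * ((k : ℝ) - (j : ℝ))) / 2) := by
  classical
  have hα0 : (0:ℝ) < α := by linarith
  set A : ℝ := (2 * (j : ℝ) - 1) * lam + (j : ℝ) * ((j : ℝ) - 1) * (2 * (j : ℝ) - 1) / 6 with hA
  set c : ℕ → ℝ := fun k => (k:ℝ) + lam/(k:ℝ) with hc
  set E : ℕ → ℝ := fun k => (c k)^2
      - (((k+j-1).factorial : ℝ)/(((k-j).factorial : ℝ))) * (c k)^((3:ℤ) - 2*(j:ℤ)) - A with hE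
  -- polynomials
  set B : Polynomial ℝ := 1 + Polynomial.C lam * Polynomial.X with hB
  set Q : Polynomial ℝ := ∏ i ∈ Finset.range j, (1 - Polynomial.C ((i:ℝ)^2) * Polynomial.X)
    with hQ
  set G : Polynomial ℝ := B^(2*j+2) - B^3 * Q - Polynomial.C A * Polynomial.X * B^(2*j) with hG
  have hBn : ∀ n : ℕ, (B^n).coeff 0 = 1 ∧ (B^n).coeff 1 = n * lam := fun n => by
    rw [hB]; exact B_coeff lam n
  have hQc : Q.coeff 0 = 1 ∧ Q.coeff 1 = - ∑ i ∈ Finset.range j, (i:ℝ)^2 := by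
    rw [hQ]; exact Q_coeff j
  have hG0 : G.coeff 0 = 0 := by
    rw [hG]
    simp only [Polynomial.coeff_sub, Polynomial.mul_coeff_zero, (hBn (2*j+2)).1, (hBn 3).1,
      (hBn (2*j)).1, hQc.1]
    simp
  have hG1 : G.coeff 1 = 0 := by
    rw [hG]
    simp only [Polynomial.coeff_sub, coeff_mul_one', Polynomial.mul_coeff_zero,
      (hBn (2*j+2)).1, (hBn (2*j+2)).2, (hBn 3).1, (hBn 3).2, (hBn (2*j)).1, (hBn (2*j)).2,
      hQc.1, hQc.2]
    simp only [Polynomial.coeff_C_zero, Polynomial.coeff_X_zero, Polynomial.coeff_X_one,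
      Polynomial.coeff_C, if_neg (one_ne_zero)]
    rw [sum_range_sq', hA]
    push_cast
    ring
  obtain ⟨Ψ, hΨ⟩ : Polynomial.X ^ 2 ∣ G := by
    rw [Polynomial.X_pow_dvd_iff]
    intro d hd
    interval_cases d
    · exact hG0
    · exact hG1
  have hGeval : ∀ x : ℝ,
      (1+lam*x)^(2*j+2) - (1+lam*x)^3 * (∏ i ∈ Finset.range j, (1 - (i:ℝ)^2*x))
        - A*x*(1+lam*x)^(2*j) = x^2 * Ψ.eval x := by
    intro x
    have h := congrArg (Polynomial.eval x) hΨ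
    simp only [hG, hB, hQ, Polynomial.eval_sub, Polynomial.eval_mul, Polynomial.eval_pow,
      Polynomial.eval_add, Polynomial.eval_one, Polynomial.eval_C, Polynomial.eval_X,
      Polynomial.eval_prod] at h
    exact h
  -- key identity
  have key : ∀ k : ℕ, j + 1 ≤ k → E k
      = Ψ.eval (1/(k:ℝ)^2) / ((k:ℝ)^2 * (1 + lam*(1/(k:ℝ)^2))^(2*j)) := by
    intro k hk
    have hk1 : 1 ≤ k := by omega
    have hK : (0:ℝ) < (k:ℝ) := by exact_mod_cast Nat.pos_of_ne_zero (by omega)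
    have hKne : (k:ℝ) ≠ 0 := ne_of_gt hK
    set K : ℝ := (k:ℝ) with hKdef
    set w : ℝ := 1 + lam * (1/K^2) with hw
    have hwpos : (0:ℝ) < w := by
      have h1 : 0 < lam * (1/K^2) := mul_pos hlam (div_pos one_pos (pow_pos hK 2))
      rw [hw]; linarith
    have hwne : w ≠ 0 := ne_of_gt hwpos
    have hcK : c k = K * w := by rw [hc, hw]; field_simp; ring
    have hcpos : 0 < c k := by rw [hcK]; positivity
    have hcne : c k ≠ 0 := ne_of_gt hcpos
    -- factorial ratio
    have hfr := fact_ratio' j k (by omega) hk1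
    have hprod : ∏ i ∈ Finset.range j, ((K:ℝ)^2 - (i:ℝ)^2)
        = K^(2*j) * ∏ i ∈ Finset.range j, (1 - (i:ℝ)^2 * (1/K^2)) := by
      rw [show (K:ℝ)^(2*j) = ∏ _i ∈ Finset.range j, K^2 by
        rw [Finset.prod_const, Finset.card_range, ← pow_mul]]
      rw [← Finset.prod_mul_distrib]
      refine Finset.prod_congr rfl fun i _ => ?_
      field_simp
    have hfne : ((k-j).factorial : ℝ) ≠ 0 := Nat.cast_ne_zero.mpr (Nat.factorial_ne_zero _)
    have hr : ((k+j-1).factorial : ℝ)/((k-j).factorial : ℝ)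
        = K^(2*j) * (∏ i ∈ Finset.range j, (1 - (i:ℝ)^2 * (1/K^2))) / K := by
      rw [hprod] at hfr
      rw [div_eq_div_iff hfne hKne]
      linear_combination hfr
    -- zpow
    have hz : (c k)^((3:ℤ) - 2*(j:ℤ)) = (c k)^3 / (c k)^(2*j) := by
      rw [zpow_sub₀ hcne]
      norm_cast
    have hGx := hGeval (1/K^2)
    have hPsix : Ψ.eval (1/K^2)
        = K^4 * ((1+lam*(1/K^2))^(2*j+2)
          - (1+lam*(1/K^2))^3 * (∏ i ∈ Finset.range j, (1 - (i:ℝ)^2*(1/K^2)))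
          - A*(1/K^2)*(1+lam*(1/K^2))^(2*j)) := by
      rw [hGx]; field_simp
    rw [hE]
    simp only
    rw [hr, hz, hcK, eq_div_iff (by positivity)]
    rw [hPsix, ← hw]
    set P : ℝ := ∏ i ∈ Finset.range j, (1 - (i:ℝ)^2 * (1/K^2)) with hP
    rw [mul_pow K w (2*j)]
    field_simp
    ring
  refine ⟨E, ?_, ?_⟩
  · -- big-O part
    have htc : Tendsto (fun k : ℕ => 1/(k:ℝ)^2) atTop (nhds 0) := by
      have h1 := tendsto_one_div_atTop_nhds_zero_nat (𝕜 := ℝ)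
      have := h1.mul h1
      simpa [div_mul_div_comm, ← pow_two] using this
    have hΨc : Tendsto (fun k : ℕ => Ψ.eval (1/(k:ℝ)^2)) atTop (nhds (Ψ.eval 0)) :=
      (Ψ.continuous.tendsto 0).comp htc
    have hwc : Tendsto (fun k : ℕ => (1 + lam*(1/(k:ℝ)^2))^(2*j)) atTop (nhds 1) := by
      have : Tendsto (fun k : ℕ => 1 + lam*(1/(k:ℝ)^2)) atTop (nhds 1) := by
        have := (tendsto_const_nhds (x := lam) (f := atTop (α := ℕ))).mul htc
        simpa using (tendsto_const_nhds (x := (1:ℝ)) (f := atTop (α := ℕ))).add this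
      simpa using this.pow (2*j)
    have hFc : Tendsto (fun k : ℕ =>
        Ψ.eval (1/(k:ℝ)^2) / (1 + lam*(1/(k:ℝ)^2))^(2*j) * ((k:ℝ))⁻¹) atTop (nhds 0) := by
      have hinv : Tendsto (fun k : ℕ => ((k:ℝ))⁻¹) atTop (nhds 0) := by
        simpa [one_div] using tendsto_one_div_atTop_nhds_zero_nat (𝕜 := ℝ)
      have := (hΨc.div hwc one_ne_zero).mul hinv
      simpa using this
    have hFO : (fun k : ℕ =>
        Ψ.eval (1/(k:ℝ)^2) / (1 + lam*(1/(k:ℝ)^2))^(2*j) * ((k:ℝ))⁻¹)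
          =O[atTop] (fun _ : ℕ => (1:ℝ)) := hFc.isBigO_one ℝ
    have hmul := hFO.mul (isBigO_refl (fun k : ℕ => ((k:ℝ))⁻¹) atTop)
    refine hmul.congr' ?_ ?_
    · filter_upwards [eventually_ge_atTop (j+1)] with k hk
      rw [key k hk]
      ring
    · filter_upwards with k
      simp
  · -- eventual equality part
    filter_upwards [eventually_ge_atTop (j+3)] with k hk
    have hk1 : 1 ≤ k := by omega
    have hK : (0:ℝ) < (k:ℝ) := by exact_mod_cast Nat.pos_of_ne_zero (by omega)
    have hcpos : 0 < c k := by
      rw [hc]; have : 0 < lam / (k:ℝ) := by positivity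
      simp only; linarith
    have hcne : c k ≠ 0 := ne_of_gt hcpos
    have hsub : 2*k - 1 - (k-j) = k+j-1 := by omega
    rw [hv k (k-j) hk1, hsub, hu k (k+j-1) hk1, hu k (k-j) hk1]
    have hcast1 : ((k+j-1 : ℕ) : ℝ) = (k:ℝ) + (j:ℝ) - 1 := by
      rw [Nat.cast_sub (by omega : 1 ≤ k + j)]; push_cast; ring
    have hcast2 : ((k-j : ℕ) : ℝ) = (k:ℝ) - (j:ℝ) := by
      rw [Nat.cast_sub (by omega : j ≤ k)]
    have hx1 : (((k+j-1:ℕ):ℝ) * (2*(k:ℝ) - ((k+j-1:ℕ):ℝ) - 1))/2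
        = (((k:ℝ) + (j:ℝ) - 1) * ((k:ℝ) - (j:ℝ)))/2 := by
      rw [hcast1]; ring
    have hx2 : (((k-j:ℕ):ℝ) * (2*(k:ℝ) - ((k-j:ℕ):ℝ) - 1))/2
        = (((k:ℝ) + (j:ℝ) - 1) * ((k:ℝ) - (j:ℝ)))/2 := by
      rw [hcast2]; ring
    rw [hx1, hx2]
    have hf1 : ((k+j-1).factorial : ℝ) ≠ 0 := Nat.cast_ne_zero.mpr (Nat.factorial_ne_zero _)
    have hf2 : ((k-j).factorial : ℝ) ≠ 0 := Nat.cast_ne_zero.mpr (Nat.factorial_ne_zero _)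
    have hpow2 : (c k)^(k+j-3) * (c k)^2 = (c k)^(k+j-1) := by
      rw [← pow_add]; congr 1; omega
    have hzz : (c k)^(k+j-3) * (c k)^((3:ℤ) - 2*(j:ℤ)) = (c k)^(k-j) := by
      have h1 : (c k)^(k+j-3) = (c k)^((k+j-3 : ℕ) : ℤ) := (zpow_natCast _ _).symm
      have h2 : (c k)^(k-j) = (c k)^((k-j : ℕ) : ℤ) := (zpow_natCast _ _).symm
      rw [h1, h2, ← zpow_add₀ hcne]
      congr 1
      omega
    have hAE : A + E k = (c k)^2
        - (((k+j-1).factorial : ℝ)/(((k-j).factorial : ℝ))) * (c k)^((3:ℤ) - 2*(j:ℤ)) := by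
      rw [hE]; ring
    have main : (c k)^(k+j-1)/((k+j-1).factorial : ℝ) - (c k)^(k-j)/((k-j).factorial : ℝ)
        = (c k)^(k+j-3)/((k+j-1).factorial : ℝ) * (A + E k) := by
      rw [hAE, mul_sub]
      rw [div_mul_eq_mul_div, hpow2]
      have : (c k)^(k+j-3)/((k+j-1).factorial : ℝ)
          * ((((k+j-1).factorial : ℝ)/(((k-j).factorial : ℝ))) * (c k)^((3:ℤ) - 2*(j:ℤ)))
          = (c k)^(k-j)/((k-j).factorial : ℝ) := by
        rw [← hzz]
        field_simp
      rw [this]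
    calc ((k:ℝ) + lam/(k:ℝ))^(k+j-1)
          * α ^ ((((k:ℝ) + (j:ℝ) - 1) * ((k:ℝ) - (j:ℝ)))/2) / ((k+j-1).factorial : ℝ)
        - ((k:ℝ) + lam/(k:ℝ))^(k-j)
          * α ^ ((((k:ℝ) + (j:ℝ) - 1) * ((k:ℝ) - (j:ℝ)))/2) / ((k-j).factorial : ℝ)
        = ((c k)^(k+j-1)/((k+j-1).factorial : ℝ) - (c k)^(k-j)/((k-j).factorial : ℝ))
          * α ^ ((((k:ℝ) + (j:ℝ) - 1) * ((k:ℝ) - (j:ℝ)))/2) := by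
          rw [hc]; ring
      _ = ((c k)^(k+j-3)/((k+j-1).factorial : ℝ) * (A + E k))
          * α ^ ((((k:ℝ) + (j:ℝ) - 1) * ((k:ℝ) - (j:ℝ)))/2) := by rw [main]
      _ = ((k:ℝ) + lam/(k:ℝ))^(k+j-3) / ((k+j-1).factorial : ℝ)
          * ((2 * (j : ℝ) - 1) * lam + (j : ℝ) * ((j : ℝ) - 1) * (2 * (j : ℝ) - 1) / 6 + E k)
          * α ^ ((((k:ℝ) + (j:ℝ) - 1) * ((k:ℝ) - (j:ℝ)))/2) := by
          rw [hc, ← hA]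
end

section
/- Let 0 < q < 1 and let f(x) = ∏_{n=1}^∞ (1 − x/x_n) be entire with zeros x_{n+1} < x_n < 0. Then for every integer n ≥ 1, Σ over all n-element index sets i_1 < ... < i_n of 1/(x_{i_1}·...·x_{i_n}) equals (−1)^n q^{n(n−1)/2}/n!, i.e., the elementary symmetric functions of the reciprocals 1/x_i are given by the Taylor coefficients of f. -/
/-- The equivalence between `Finset ℕ` and the sigma type of finsets of fixed card. -/
def finsetSigmaCardEquiv : (Σ n : ℕ, {s : Finset ℕ // s.card = n}) ≃ Finset ℕ where
  toFun p := p.2.1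
  invFun s := ⟨s.card, s, rfl⟩
  left_inv := by rintro ⟨n, s, rfl⟩; rfl
  right_inv s := rfl

open Finset in
lemma aux_one_add_sum_le_prod (c : ℕ → ℝ) (hc : ∀ i, 0 ≤ c i) (s : Finset ℕ) :
    1 + ∑ i ∈ s, c i ≤ ∏ i ∈ s, (1 + c i) := by
  induction s using Finset.cons_induction with
  | empty => simp
  | cons a s ha ih =>
    rw [Finset.sum_cons, Finset.prod_cons]
    have h1 : (0:ℝ) ≤ ∑ i ∈ s, c i := Finset.sum_nonneg fun i _ => hc i
    nlinarith [hc a, mul_nonneg (hc a) h1]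

lemma aux_summable_of_hasProd {c : ℕ → ℝ} (hc : ∀ i, 0 ≤ c i) {L : ℝ}
    (hL : HasProd (fun i => 1 + c i) L) : Summable c := by
  have hp1 : ∀ s : Finset ℕ, 1 ≤ ∏ i ∈ s, (1 + c i) := fun s =>
    le_trans (by linarith [Finset.sum_nonneg (fun i (_ : i ∈ s) => hc i)])
      (aux_one_add_sum_le_prod c hc s)
  have hmono : Monotone (fun N => ∏ i ∈ Finset.range N, (1 + c i)) := by
    intro m n hmn
    dsimp only
    rw [← Finset.prod_sdiff (Finset.range_subset_range.2 hmn)]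
    calc ∏ i ∈ Finset.range m, (1 + c i)
        = 1 * ∏ i ∈ Finset.range m, (1 + c i) := (one_mul _).symm
      _ ≤ (∏ i ∈ Finset.range n \ Finset.range m, (1 + c i)) *
            ∏ i ∈ Finset.range m, (1 + c i) :=
          mul_le_mul_of_nonneg_right (hp1 _) (le_trans zero_le_one (hp1 _))
  have hbd : ∀ N, ∏ i ∈ Finset.range N, (1 + c i) ≤ L :=
    fun N => hmono.ge_of_tendsto hL.tendsto_prod_nat N
  refine summable_of_sum_range_le hc (c := L) fun N => ?_
  have := aux_one_add_sum_le_prod c hc (Finset.range N)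
  linarith [hbd N]

lemma aux_prod_add_one (c : ℕ → ℝ) (s : Finset ℕ) :
    ∏ i ∈ s, (1 + c i) = ∑ t ∈ s.powerset, ∏ i ∈ t, c i := by
  classical
  have := Finset.prod_add c (fun _ => (1:ℝ)) s
  simp only [Finset.prod_const_one, mul_one] at this
  rw [← this]
  exact Finset.prod_congr rfl fun i _ => by ring

lemma aux_hasSum_finsets {c : ℕ → ℝ} (hc : ∀ i, 0 ≤ c i) {L : ℝ}
    (hL : HasProd (fun i => 1 + c i) L) :
    HasSum (fun s : Finset ℕ => ∏ i ∈ s, c i) L := by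
  classical
  have hnn : ∀ s : Finset ℕ, 0 ≤ ∏ i ∈ s, c i :=
    fun s => Finset.prod_nonneg fun i _ => hc i
  have hmono : Monotone (fun N => ∏ i ∈ Finset.range N, (1 + c i)) := by
    have hp1 : ∀ s : Finset ℕ, 1 ≤ ∏ i ∈ s, (1 + c i) := fun s =>
      le_trans (by linarith [Finset.sum_nonneg (fun i (_ : i ∈ s) => hc i)])
        (aux_one_add_sum_le_prod c hc s)
    intro m n hmn
    dsimp only
    rw [← Finset.prod_sdiff (Finset.range_subset_range.2 hmn)]
    calc ∏ i ∈ Finset.range m, (1 + c i)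
        = 1 * ∏ i ∈ Finset.range m, (1 + c i) := (one_mul _).symm
      _ ≤ (∏ i ∈ Finset.range n \ Finset.range m, (1 + c i)) *
            ∏ i ∈ Finset.range m, (1 + c i) :=
          mul_le_mul_of_nonneg_right (hp1 _) (le_trans zero_le_one (hp1 _))
  have hbd : ∀ N, ∏ i ∈ Finset.range N, (1 + c i) ≤ L :=
    fun N => hmono.ge_of_tendsto hL.tendsto_prod_nat N
  apply hasSum_of_isLUB_of_nonneg _ hnn
  constructor
  · rintro z ⟨T, rfl⟩
    set N : ℕ := (T.sup fun s => s.sup id) + 1 with hN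
    have hsub : T ⊆ (Finset.range N).powerset := by
      intro s hs
      rw [Finset.mem_powerset]
      intro i hi
      rw [Finset.mem_range]
      calc i ≤ s.sup id := Finset.le_sup (f := id) hi
        _ ≤ T.sup fun s => s.sup id := Finset.le_sup (f := fun s => s.sup id) hs
        _ < N := Nat.lt_succ_self _
    calc ∑ s ∈ T, ∏ i ∈ s, c i
        ≤ ∑ s ∈ (Finset.range N).powerset, ∏ i ∈ s, c i :=
          Finset.sum_le_sum_of_subset_of_nonneg hsub fun s _ _ => hnn s
      _ = ∏ i ∈ Finset.range N, (1 + c i) := (aux_prod_add_one c _).symm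
      _ ≤ L := hbd N
  · intro b hb
    refine le_of_tendsto hL.tendsto_prod_nat (Filter.Eventually.of_forall fun N => ?_)
    rw [aux_prod_add_one c]
    exact hb ⟨(Finset.range N).powerset, rfl⟩

lemma aux_coeff_unique {A B : ℕ → ℝ} (hA : ∀ k, 0 ≤ A k) (hB : ∀ k, 0 ≤ B k)
    (h : ∀ y : ℝ, 0 < y → y ≤ 1 → ∃ S : ℝ,
      HasSum (fun k => A k * y ^ k) S ∧ HasSum (fun k => B k * y ^ k) S) :
    ∀ n, A n = B n := by
  -- summability at y = 1
  obtain ⟨S1, hSA1, hSB1⟩ := h 1 one_pos le_rfl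
  have hAsum : Summable A := by simpa using hSA1.summable
  have hBsum : Summable B := by simpa using hSB1.summable
  intro n
  induction n using Nat.strong_induction_on with
  | _ n IH =>
  set C : ℝ := (∑' k, A (k + (n + 1))) + ∑' k, B (k + (n + 1)) with hC
  have hCsumA : Summable fun k => A (k + (n + 1)) := (summable_nat_add_iff _).2 hAsum
  have hCsumB : Summable fun k => B (k + (n + 1)) := (summable_nat_add_iff _).2 hBsum
  have hC0 : 0 ≤ C := add_nonneg (tsum_nonneg fun k => hA _) (tsum_nonneg fun k => hB _)
  have key : ∀ y : ℝ, 0 < y → y ≤ 1 → |A n - B n| ≤ C * y := by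
    intro y hy0 hy1
    obtain ⟨S, hSA, hSB⟩ := h y hy0 hy1
    have hP : ∑ k ∈ Finset.range n, A k * y ^ k = ∑ k ∈ Finset.range n, B k * y ^ k :=
      Finset.sum_congr rfl fun k hk => by rw [IH k (Finset.mem_range.1 hk)]
    have hTA : HasSum (fun k => A (k + n) * y ^ (k + n))
        (S - ∑ k ∈ Finset.range n, A k * y ^ k) :=
      (hasSum_nat_add_iff (f := fun k => A k * y ^ k) n).2
        (by rw [sub_add_cancel]; exact hSA)
    have hTB : HasSum (fun k => B (k + n) * y ^ (k + n))
        (S - ∑ k ∈ Finset.range n, A k * y ^ k) :=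
      (hasSum_nat_add_iff (f := fun k => B k * y ^ k) n).2
        (by rw [hP, sub_add_cancel]; exact hSB)
    have hd : HasSum (fun k => (A (k + n) - B (k + n)) * y ^ (k + n)) 0 := by
      have := hTA.sub hTB
      simp only [sub_self] at this
      convert this using 2 with k
      · rfl
      ring
    have hd1 : HasSum (fun k => (A (k + 1 + n) - B (k + 1 + n)) * y ^ (k + 1 + n))
        (0 - ∑ k ∈ Finset.range 1, (A (k + n) - B (k + n)) * y ^ (k + n)) :=
      (hasSum_nat_add_iff (f := fun k => (A (k + n) - B (k + n)) * y ^ (k + n)) 1).2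
        (by rw [sub_add_cancel]; exact hd)
    have hd0 : (A n - B n) * y ^ n
        = -∑' k, (A (k + 1 + n) - B (k + 1 + n)) * y ^ (k + 1 + n) := by
      have := hd1.tsum_eq
      simp only [Finset.range_one, Finset.sum_singleton, Nat.zero_add, zero_add, zero_sub] at this
      rw [this, neg_neg]
    have habs : |∑' k, (A (k + 1 + n) - B (k + 1 + n)) * y ^ (k + 1 + n)|
        ≤ C * y ^ (n + 1) := by
      have hbound : ∀ k, |(A (k + 1 + n) - B (k + 1 + n)) * y ^ (k + 1 + n)|
          ≤ (A (k + (n + 1)) + B (k + (n + 1))) * y ^ (n + 1) := by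
        intro k
        have h1 : |A (k + 1 + n) - B (k + 1 + n)| ≤ A (k + (n + 1)) + B (k + (n + 1)) := by
          have : k + 1 + n = k + (n + 1) := by ring
          rw [this]
          exact (abs_sub _ _).trans (by
            rw [abs_of_nonneg (hA _), abs_of_nonneg (hB _)])
        have h2 : |y ^ (k + 1 + n)| ≤ y ^ (n + 1) := by
          rw [abs_of_nonneg (pow_nonneg hy0.le _)]
          calc y ^ (k + 1 + n) = y ^ (n + 1) * y ^ k := by ring
            _ ≤ y ^ (n + 1) * 1 :=
              mul_le_mul_of_nonneg_left (pow_le_one₀ hy0.le hy1) (pow_nonneg hy0.le _)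
            _ = y ^ (n + 1) := mul_one _
        calc |(A (k + 1 + n) - B (k + 1 + n)) * y ^ (k + 1 + n)|
            = |A (k + 1 + n) - B (k + 1 + n)| * |y ^ (k + 1 + n)| := abs_mul _ _
          _ ≤ (A (k + (n + 1)) + B (k + (n + 1))) * y ^ (n + 1) :=
            mul_le_mul h1 h2 (abs_nonneg _) (le_trans (abs_nonneg _) h1)
      have hsumdom : Summable fun k => (A (k + (n + 1)) + B (k + (n + 1))) * y ^ (n + 1) :=
        (hCsumA.add hCsumB).mul_right _
      calc |∑' k, (A (k + 1 + n) - B (k + 1 + n)) * y ^ (k + 1 + n)|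
          ≤ ∑' k, |(A (k + 1 + n) - B (k + 1 + n)) * y ^ (k + 1 + n)| := by
            have hsumabs : Summable fun k => ‖(A (k + 1 + n) - B (k + 1 + n)) * y ^ (k + 1 + n)‖ := by
              simp only [Real.norm_eq_abs]
              exact Summable.of_nonneg_of_le (fun k => abs_nonneg _) hbound hsumdom
            have := norm_tsum_le_tsum_norm (f := fun k => (A (k + 1 + n) - B (k + 1 + n)) * y ^ (k + 1 + n)) hsumabs
            simp only [Real.norm_eq_abs] at this
            exact this
        _ ≤ ∑' k, (A (k + (n + 1)) + B (k + (n + 1))) * y ^ (n + 1) := by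
            apply Summable.tsum_le_tsum hbound _ hsumdom
            exact (Summable.of_nonneg_of_le (fun k => abs_nonneg _) hbound hsumdom)
        _ = C * y ^ (n + 1) := by
            rw [tsum_mul_right, hC, Summable.tsum_add hCsumA hCsumB]
    have hyn : 0 < y ^ n := pow_pos hy0 n
    have : |A n - B n| * y ^ n ≤ C * y ^ (n + 1) := by
      calc |A n - B n| * y ^ n = |(A n - B n) * y ^ n| := by
            rw [abs_mul, abs_of_nonneg (pow_nonneg hy0.le n)]
        _ = |∑' k, (A (k + 1 + n) - B (k + 1 + n)) * y ^ (k + 1 + n)| := by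
            rw [hd0, abs_neg]
        _ ≤ C * y ^ (n + 1) := habs
    have : |A n - B n| ≤ C * y := by
      have h3 : C * y ^ (n + 1) = (C * y) * y ^ n := by ring
      rw [h3] at this
      exact le_of_mul_le_mul_right this hyn
    exact this
  have : |A n - B n| ≤ 0 := by
    refine le_of_forall_pos_le_add fun ε hε => ?_
    set y : ℝ := min 1 (ε / (C + 1)) with hy
    have hy0 : 0 < y := lt_min one_pos (div_pos hε (by linarith))
    have hy1 : y ≤ 1 := min_le_left _ _
    calc |A n - B n| ≤ C * y := key y hy0 hy1
      _ ≤ C * (ε / (C + 1)) := mul_le_mul_of_nonneg_left (min_le_right _ _) hC0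
      _ ≤ ε := by
          rw [mul_div_assoc']
          rw [div_le_iff₀ (by linarith : (0:ℝ) < C + 1)]
          nlinarith
      _ = 0 + ε := (zero_add ε).symm
  have := abs_nonpos_iff.1 this
  linarith [sub_eq_zero.1 this]

/-- Let `0 < q < 1` and let `f(y) = Σ_{n=0}^∞ y^n q^{n(n-1)/2}/n! = ∏_{n=1}^∞ (1 - y/x_n)`
be entire with strictly decreasing negative zeros `(x_n)`. Then for every integer `n ≥ 1`,
the sum over all `n`-element index sets `i₁ < ... < iₙ` of `1/(x_{i₁}·...·x_{iₙ})` equals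
`(-1)^n q^{n(n-1)/2}/n!`: the elementary symmetric functions of the reciprocals `1/x_i`
are given by the Taylor coefficients of `f`. -/
theorem elementary_symmetric_reciprocals (q : ℝ) (hq0 : 0 < q) (hq1 : q < 1)
    (x : ℕ → ℝ) (hxanti : StrictAnti x) (hxneg : ∀ n : ℕ, x n < 0)
    (f : ℝ → ℝ)
    (hf : ∀ y : ℝ, f y = ∑' n : ℕ, y ^ n * q ^ (n * (n - 1) / 2) / (n.factorial : ℝ))
    (hprod : ∀ y : ℝ, f y = ∏' n : ℕ, (1 - y / x n)) :
    ∀ n : ℕ, 1 ≤ n →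
      HasSum (fun s : {s : Finset ℕ // s.card = n} => ∏ i ∈ (s : Finset ℕ), (x i)⁻¹)
        ((-1 : ℝ) ^ n * q ^ (n * (n - 1) / 2) / (n.factorial : ℝ)) := by
  classical
  set c : ℕ → ℝ := fun i => -(x i)⁻¹ with hcdef
  have hc : ∀ i, 0 < c i := fun i => by
    simp only [hcdef, neg_pos]
    exact inv_lt_zero.2 (hxneg i)
  set b : ℕ → ℝ := fun n => q ^ (n * (n - 1) / 2) / (n.factorial : ℝ) with hbdef
  have hb0 : ∀ n, 0 ≤ b n := fun n =>
    div_nonneg (pow_nonneg hq0.le _) (Nat.cast_nonneg _)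
  -- summability of the defining series
  have hsummable : ∀ y : ℝ, Summable (fun n : ℕ => b n * y ^ n) := by
    intro y
    refine Summable.of_norm ?_
    refine Summable.of_nonneg_of_le (fun n => norm_nonneg _) (fun n => ?_)
      (Real.summable_pow_div_factorial |y|)
    rw [Real.norm_eq_abs, abs_mul, abs_pow, hbdef]
    have h1 : |q ^ (n * (n - 1) / 2) / (n.factorial : ℝ)| = q ^ (n * (n - 1) / 2) / n.factorial :=
      abs_of_nonneg (hb0 n)
    rw [h1, div_mul_eq_mul_div]
    have hfac : (0:ℝ) < n.factorial := Nat.cast_pos.2 n.factorial_pos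
    have hq' : q ^ (n * (n - 1) / 2) ≤ 1 := pow_le_one₀ hq0.le hq1.le
    have h2 : q ^ (n * (n - 1) / 2) * |y| ^ n ≤ |y| ^ n := by
      nlinarith [pow_nonneg (abs_nonneg y) n]
    exact (div_le_div_iff_of_pos_right hfac).2 h2
  -- f y is the sum of the series
  have hfsum : ∀ y : ℝ, HasSum (fun n : ℕ => b n * y ^ n) (f y) := by
    intro y
    have h1 : (fun n : ℕ => b n * y ^ n)
        = fun n : ℕ => y ^ n * q ^ (n * (n - 1) / 2) / (n.factorial : ℝ) := by
      funext n; rw [hbdef]; ring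
    rw [hf y, ← h1]
    exact (hsummable y).hasSum
  -- lower bound on f for nonneg y
  have hge : ∀ y : ℝ, 0 ≤ y → 1 + y ≤ f y := by
    intro y hy
    have h2 : ∑ n ∈ Finset.range 2, b n * y ^ n = 1 + y := by
      simp [hbdef, Finset.sum_range_succ]
    calc 1 + y = ∑ n ∈ Finset.range 2, b n * y ^ n := h2.symm
      _ ≤ f y := sum_le_hasSum _ (fun n _ => mul_nonneg (hb0 n) (pow_nonneg hy n)) (hfsum y)
  -- the infinite product converges for y > 0
  have hprod' : ∀ y : ℝ, 0 < y → HasProd (fun i => 1 + y * c i) (f y) := by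
    ·   intro y hy
        have hne : f y ≠ 1 := by have := hge y hy.le; linarith
        have heq : (fun i => 1 + y * c i) = fun i => 1 - y / x i := by
          funext i
          rw [hcdef, div_eq_mul_inv]
          ring
        have hmul : Multipliable fun i : ℕ => 1 - y / x i := by
          by_contra hcon
          exact hne ((hprod y).trans (tprod_eq_one_of_not_multipliable hcon))
        have := hmul.hasProd
        rw [← hprod y] at this
        rw [heq]
        exact this
  have hkey : ∀ y : ℝ, 0 < y → HasSum (fun s : Finset ℕ => ∏ i ∈ s, (y * c i)) (f y) :=
    fun y hy => aux_hasSum_finsets (fun i => (mul_pos hy (hc i)).le) (hprod' y hy)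
  have hsum1 : Summable (fun s : Finset ℕ => ∏ i ∈ s, c i) := by
    have := (hkey 1 one_pos).summable
    simpa using this
  have hsub : ∀ n : ℕ,
      Summable (fun s : {s : Finset ℕ // s.card = n} => ∏ i ∈ (s : Finset ℕ), c i) :=
    fun n => hsum1.subtype {s : Finset ℕ | s.card = n}
  set E : ℕ → ℝ := fun n => ∑' s : {s : Finset ℕ // s.card = n}, ∏ i ∈ (s : Finset ℕ), c i
    with hEdef
  have hE : ∀ n, HasSum (fun s : {s : Finset ℕ // s.card = n} =>
      ∏ i ∈ (s : Finset ℕ), c i) (E n) := fun n => (hsub n).hasSum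
  have hE0 : ∀ n, 0 ≤ E n := fun n =>
    tsum_nonneg fun s => Finset.prod_nonneg fun i _ => (hc i).le
  have hEy : ∀ y : ℝ, 0 < y → HasSum (fun n : ℕ => E n * y ^ n) (f y) := by
    intro y hy
    have h1 : HasSum ((fun s : Finset ℕ => ∏ i ∈ s, (y * c i)) ∘
        (finsetSigmaCardEquiv)) (f y) :=
      (Equiv.hasSum_iff _).2 (hkey y hy)
    refine HasSum.sigma h1 ?_
    intro n
    have h2 : (fun s : {s : Finset ℕ // s.card = n} =>
        ((fun s : Finset ℕ => ∏ i ∈ s, (y * c i)) ∘ finsetSigmaCardEquiv) ⟨n, s⟩)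
        = fun s : {s : Finset ℕ // s.card = n} => (∏ i ∈ (s : Finset ℕ), c i) * y ^ n := by
      funext s
      show ∏ i ∈ (s : Finset ℕ), (y * c i) = (∏ i ∈ (s : Finset ℕ), c i) * y ^ n
      rw [Finset.prod_mul_distrib, Finset.prod_const, s.2]
      ring
    rw [h2]
    exact (hE n).mul_right (y ^ n)
  have hEB : ∀ n, E n = b n :=
    aux_coeff_unique hE0 hb0 (fun y hy0 hy1 => ⟨f y, hEy y hy0, hfsum y⟩)
  intro n hn
  have h3 : (fun s : {s : Finset ℕ // s.card = n} => ∏ i ∈ (s : Finset ℕ), (x i)⁻¹)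
      = fun s : {s : Finset ℕ // s.card = n} =>
        (-1 : ℝ) ^ n * ∏ i ∈ (s : Finset ℕ), c i := by
    funext s
    have h4 : ∀ i ∈ (s : Finset ℕ), (x i)⁻¹ = -1 * c i := fun i _ => by
      rw [hcdef]; ring
    rw [Finset.prod_congr rfl h4, Finset.prod_mul_distrib, Finset.prod_const, s.2]
  rw [h3]
  have h5 := (hE n).mul_left ((-1 : ℝ) ^ n)
  rw [hEB n] at h5
  have h6 : (-1 : ℝ) ^ n * b n = (-1 : ℝ) ^ n * q ^ (n * (n - 1) / 2) / (n.factorial : ℝ) := by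
    rw [hbdef]; ring
  rw [h6] at h5
  exact h5
end
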